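/- arXiv:2309.09706 — 5 statements merged into one kernel-verified Lean document; each statement's English description precedes it below -/
import Mathlib

section
/- Let −π < θ_m < θ_M < π with 0 < θ_M − θ_m < π, and let K = {(r cos θ, r sin θ) ∈ ℝ² : r > 0, θ_m < θ < θ_M}. Then for every s > 0, the (Lebesgue) integral over the sector of the CGO solution satisfies ∫_K exp(−s√(x₁ + i x₂)) dx = 6 i (e^{−2iθ_M} − e^{−2iθ_m}) s^{−4}. -/
open MeasureTheory

open Set Complex Filter Real

lemma tendsto_pow_mul_exp_neg_mul (k : ℕ) {b : ℝ} (hb : 0 < b) :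
    Tendsto (fun t : ℝ => t ^ k * Real.exp (-(b * t))) atTop (nhds 0) := by
  have h1 : Tendsto (fun t : ℝ => (b * t) ^ k * Real.exp (-(b * t))) atTop (nhds 0) :=
    (tendsto_pow_mul_exp_neg_atTop_nhds_zero k).comp (tendsto_id.const_mul_atTop hb)
  have h2 := h1.const_mul ((b : ℝ) ^ k)⁻¹
  simp only [mul_zero] at h2
  refine h2.congr (fun t => ?_)
  rw [mul_pow]
  field_simp

lemma integrableOn_cube_exp {w : ℂ} (hw : 0 < w.re) :
    IntegrableOn (fun t : ℝ => (t : ℂ) ^ 3 * Complex.exp (-(w * t))) (Ioi 0) := by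
  have hbound : IntegrableOn (fun t : ℝ => t ^ (3:ℝ) * Real.exp (-w.re * t ^ (1:ℝ))) (Ioi 0) :=
    integrableOn_rpow_mul_exp_neg_mul_rpow (by norm_num) one_pos hw
  refine Integrable.mono' hbound ?_ ?_
  · exact (Continuous.aestronglyMeasurable (by continuity)).restrict
  · filter_upwards [ae_restrict_mem measurableSet_Ioi] with t ht
    rw [mem_Ioi] at ht
    rw [norm_mul, Complex.norm_exp]
    simp only [neg_re, Complex.mul_re, Complex.ofReal_re, Complex.ofReal_im, mul_zero, sub_zero]
    rw [Real.rpow_one, show (3:ℝ) = ((3:ℕ):ℝ) by norm_num, Real.rpow_natCast]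
    rw [neg_mul, norm_pow, Complex.norm_real, Real.norm_eq_abs, abs_of_pos ht]

lemma integral_cube_exp {w : ℂ} (hw : 0 < w.re) :
    ∫ t in Ioi (0:ℝ), (t:ℂ) ^ 3 * Complex.exp (-(w * t)) = 6 / w ^ 4 := by
  have hw0 : w ≠ 0 := fun h => by simp [h] at hw
  set F : ℝ → ℂ := fun t =>
    -(w^4)⁻¹ * (Complex.exp (-(w * t)) *
      ((w*t)^3 + 3*(w*t)^2 + 6*(w*t) + 6)) with hF
  have hG : ∀ z : ℂ, HasDerivAt (fun z : ℂ =>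
      -(w^4)⁻¹ * (Complex.exp (-(w * z)) * ((w*z)^3 + 3*(w*z)^2 + 6*(w*z) + 6)))
      (z^3 * Complex.exp (-(w * z))) z := by
    intro z
    have h1 : HasDerivAt (fun z : ℂ => Complex.exp (-(w * z)))
        (-w * Complex.exp (-(w * z))) z := by
      have := (((hasDerivAt_id z).const_mul w).neg).cexp
      simpa [mul_comm] using this
    have h2 : HasDerivAt (fun z : ℂ => (w*z)^3 + 3*(w*z)^2 + 6*(w*z) + 6)
        (3*(w*z)^2*w + 3*(2*(w*z)*w) + 6*w) z := by
      have hwz : HasDerivAt (fun z : ℂ => w*z) w z := by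
        simpa using (hasDerivAt_id z).const_mul w
      have h2' := (((hwz.pow 3).add ((hwz.pow 2).const_mul 3)).add
        (hwz.const_mul 6)).add_const (6:ℂ)
      refine h2'.congr_deriv ?_
      push_cast; ring
    have h3 := (h1.mul h2).const_mul (-(w^4)⁻¹)
    refine h3.congr_deriv ?_
    have hc : -w * Complex.exp (-(w * z)) * ((w*z)^3 + 3*(w*z)^2 + 6*(w*z) + 6) +
        Complex.exp (-(w * z)) * (3*(w*z)^2*w + 3*(2*(w*z)*w) + 6*w)
        = -(w^4) * (z^3 * Complex.exp (-(w*z))) := by ring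
    rw [hc]
    field_simp
  have hderiv : ∀ t : ℝ, HasDerivAt F ((t:ℂ)^3 * Complex.exp (-(w * t))) t := by
    intro t
    exact (hG (t:ℂ)).comp_ofReal
  have htends : Tendsto F atTop (nhds 0) := by
    apply squeeze_zero_norm' (a := fun t : ℝ =>
      (‖w‖⁻¹^4 * (‖w‖^3 + 3*‖w‖^2 + 6*‖w‖ + 6)) * (t^3 * Real.exp (-(w.re * t))))
    · filter_upwards [eventually_ge_atTop 1] with t ht
      have ht0 : (0:ℝ) < t := lt_of_lt_of_le one_pos ht
      rw [hF]
      rw [norm_mul, norm_neg, norm_inv, norm_pow, norm_mul,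
        Complex.norm_exp]
      have hre : (-(w * (t:ℂ))).re = -(w.re * t) := by
        simp [Complex.mul_re]
      rw [hre, ← inv_pow]
      have hnorm : ‖(w*(t:ℂ))^3 + 3*(w*(t:ℂ))^2 + 6*(w*(t:ℂ)) + 6‖
          ≤ (‖w‖^3 + 3*‖w‖^2 + 6*‖w‖ + 6) * t^3 := by
        have hwt : ‖w*(t:ℂ)‖ = ‖w‖ * t := by
          rw [norm_mul, Complex.norm_real, Real.norm_eq_abs, abs_of_pos ht0]
        have h1 : t^2 ≤ t^3 := pow_le_pow_right₀ (by linarith) (by norm_num)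
        have h2 : t ≤ t^3 := by nlinarith
        have h3 : (1:ℝ) ≤ t^3 := by nlinarith
        have hw1 : (0:ℝ) ≤ ‖w‖ := norm_nonneg w
        calc ‖(w*(t:ℂ))^3 + 3*(w*(t:ℂ))^2 + 6*(w*(t:ℂ)) + 6‖
            ≤ ‖(w*(t:ℂ))^3 + 3*(w*(t:ℂ))^2 + 6*(w*(t:ℂ))‖ + ‖(6:ℂ)‖ := norm_add_le _ _
          _ ≤ ‖(w*(t:ℂ))^3 + 3*(w*(t:ℂ))^2‖ + ‖6*(w*(t:ℂ))‖ + ‖(6:ℂ)‖ := by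
              gcongr; exact norm_add_le _ _
          _ ≤ ‖(w*(t:ℂ))^3‖ + ‖3*(w*(t:ℂ))^2‖ + ‖6*(w*(t:ℂ))‖ + ‖(6:ℂ)‖ := by
              gcongr; exact norm_add_le _ _
          _ = ‖w‖^3*t^3 + 3*(‖w‖^2*t^2) + 6*(‖w‖*t) + 6 := by
              simp only [norm_mul, norm_pow, hwt, mul_pow, Complex.norm_real,
                Real.norm_eq_abs, abs_of_pos ht0]
              norm_num
          _ ≤ (‖w‖^3 + 3*‖w‖^2 + 6*‖w‖ + 6) * t^3 := by nlinarith
      have hstep := mul_le_mul_of_nonneg_left hnorm (le_of_lt (Real.exp_pos (-(w.re*t))))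
      have hstep2 := mul_le_mul_of_nonneg_left hstep
        (by positivity : (0:ℝ) ≤ ‖w‖⁻¹^4)
      refine hstep2.trans (le_of_eq (by ring))
    · have := (tendsto_pow_mul_exp_neg_mul 3 hw).const_mul
        (‖w‖⁻¹^4 * (‖w‖^3 + 3*‖w‖^2 + 6*‖w‖ + 6))
      simpa using this
  have key := integral_Ioi_of_hasDerivAt_of_tendsto' (a := 0)
    (fun t _ => hderiv t) (integrableOn_cube_exp hw) htends
  rw [key, hF]
  simp
  rw [div_eq_mul_inv]
  ring

lemma sqrt_eqon {w : ℂ} : Set.EqOn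
    (fun x : ℝ => (|(2:ℝ)| * x ^ ((2:ℝ) - 1)) •
      ((fun r : ℝ => (r : ℂ) * Complex.exp (-(w * Real.sqrt r))) (x ^ (2:ℝ))))
    (fun x : ℝ => (2:ℂ) * ((x:ℂ) ^ 3 * Complex.exp (-(w * x)))) (Ioi 0) := by
  intro x hx
  rw [mem_Ioi] at hx
  have h2 : x ^ (2:ℝ) = x ^ (2:ℕ) := by
    rw [show ((2:ℝ)) = ((2:ℕ):ℝ) by norm_num, Real.rpow_natCast]
  simp only [h2, Real.sqrt_sq hx.le]
  rw [show ((2:ℝ) - 1) = ((1:ℕ):ℝ) by norm_num, Real.rpow_natCast]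
  rw [abs_of_pos (by norm_num : (0:ℝ) < 2)]
  rw [real_smul]
  push_cast
  ring_nf

lemma integrableOn_mul_exp_sqrt {w : ℂ} (hw : 0 < w.re) :
    IntegrableOn (fun r : ℝ => (r : ℂ) * Complex.exp (-(w * Real.sqrt r))) (Ioi 0) := by
  rw [← integrableOn_Ioi_comp_rpow_iff _ (two_ne_zero (α := ℝ))]
  refine IntegrableOn.congr_fun ?_ sqrt_eqon.symm measurableSet_Ioi
  exact ((integrableOn_cube_exp hw).const_mul 2)

lemma integral_mul_exp_sqrt {w : ℂ} (hw : 0 < w.re) :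
    ∫ r in Ioi (0:ℝ), (r : ℂ) * Complex.exp (-(w * Real.sqrt r)) = 12 / w ^ 4 := by
  rw [← integral_comp_rpow_Ioi (fun r : ℝ => (r:ℂ) * Complex.exp (-(w * Real.sqrt r)))
    (two_ne_zero (α := ℝ))]
  rw [setIntegral_congr_fun measurableSet_Ioi sqrt_eqon]
  rw [integral_const_mul, integral_cube_exp hw]
  rw [div_eq_mul_inv, div_eq_mul_inv]
  ring

lemma sector_mem_iff (θm θM : ℝ) (hθm : -Real.pi < θm) (hθM : θM < Real.pi)
    (r θ : ℝ) (hr : 0 < r) (h1 : -Real.pi < θ) (h2 : θ < Real.pi) :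
    (((r * Real.cos θ, r * Real.sin θ) : ℝ × ℝ) ∈ {x : ℝ × ℝ | ∃ r' θ' : ℝ,
      0 < r' ∧ θm < θ' ∧ θ' < θM ∧ x = (r' * Real.cos θ', r' * Real.sin θ')})
      ↔ (θm < θ ∧ θ < θM) := by
  constructor
  · rintro ⟨r', θ', hr', hm', hM', heq⟩
    have hc1 : r * Real.cos θ = r' * Real.cos θ' := congrArg Prod.fst heq
    have hc2 : r * Real.sin θ = r' * Real.sin θ' := congrArg Prod.snd heq
    have hz' : (r:ℂ) * (Real.cos θ + Real.sin θ * Complex.I)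
        = (r':ℂ) * (Real.cos θ' + Real.sin θ' * Complex.I) := by
      apply Complex.ext
      · simpa [Complex.cos_ofReal_re] using hc1
      · simpa [Complex.sin_ofReal_re] using hc2
    have harg := congrArg Complex.arg hz'
    simp only [Complex.ofReal_cos, Complex.ofReal_sin] at harg
    rw [Complex.arg_real_mul _ hr, Complex.arg_real_mul _ hr',
      Complex.arg_cos_add_sin_mul_I ⟨h1, h2.le⟩,
      Complex.arg_cos_add_sin_mul_I ⟨by linarith, by linarith⟩] at harg
    exact ⟨harg ▸ hm', harg ▸ hM'⟩
  · rintro ⟨h3, h4⟩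
    exact ⟨r, θ, hr, h3, h4, rfl⟩

lemma sector_measurable (θm θM : ℝ) (hθm : -Real.pi < θm) (hθM : θM < Real.pi)
    (hlt : θm < θM) :
    MeasurableSet {x : ℝ × ℝ | ∃ r' θ' : ℝ,
      0 < r' ∧ θm < θ' ∧ θ' < θM ∧ x = (r' * Real.cos θ', r' * Real.sin θ')} := by
  have hset : {x : ℝ × ℝ | ∃ r' θ' : ℝ,
      0 < r' ∧ θm < θ' ∧ θ' < θM ∧ x = (r' * Real.cos θ', r' * Real.sin θ')}
      = (fun x : ℝ × ℝ => ((x.1 : ℂ) + (x.2 : ℂ) * Complex.I)) ⁻¹'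
        ({0}ᶜ ∩ Complex.arg ⁻¹' Ioo θm θM) := by
    ext x
    simp only [mem_preimage, mem_inter_iff, mem_compl_iff, mem_singleton_iff, mem_Ioo,
      mem_setOf_eq]
    constructor
    · rintro ⟨r, θ, hr, h3, h4, rfl⟩
      have hzeq : ((r * Real.cos θ : ℝ) : ℂ) + ((r * Real.sin θ : ℝ) : ℂ) * Complex.I
          = (r : ℂ) * (Real.cos θ + Real.sin θ * Complex.I) := by push_cast; ring
      have habs : ‖(r:ℂ) * (Real.cos θ + Real.sin θ * Complex.I)‖ = r := by
        rw [norm_mul, Complex.norm_real, Real.norm_eq_abs, Complex.ofReal_cos, Complex.ofReal_sin,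
          Complex.norm_cos_add_sin_mul_I, abs_of_pos hr, mul_one]
      have hz0 : (r:ℂ) * (Real.cos θ + Real.sin θ * Complex.I) ≠ 0 := by
        intro h; rw [h] at habs; simp at habs; exact hr.ne' habs.symm
      have harg : Complex.arg ((r:ℂ) * ((Real.cos θ : ℂ) + (Real.sin θ : ℂ) * Complex.I)) = θ := by
        rw [Complex.arg_real_mul _ hr, Complex.ofReal_cos, Complex.ofReal_sin,
          Complex.arg_cos_add_sin_mul_I ⟨by linarith, by linarith⟩]
      refine ⟨by rw [hzeq]; exact hz0, ?_, ?_⟩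
      · rw [hzeq, harg]; exact h3
      · rw [hzeq, harg]; exact h4
    · rintro ⟨h0, harg1, harg2⟩
      set z := (x.1 : ℂ) + (x.2 : ℂ) * Complex.I with hzdef
      refine ⟨‖z‖, Complex.arg z, norm_pos_iff.mpr h0, harg1, harg2, ?_⟩
      have hz := Complex.norm_mul_cos_add_sin_mul_I z
      rw [← Complex.ofReal_cos, ← Complex.ofReal_sin] at hz
      have hre := congrArg Complex.re hz
      have him := congrArg Complex.im hz
      simp only [Complex.add_re, Complex.add_im, Complex.mul_re, Complex.mul_im,
        Complex.ofReal_re, Complex.ofReal_im, Complex.I_re, Complex.I_im,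
        mul_zero, mul_one, zero_mul, sub_zero, add_zero, zero_add, zero_sub, sub_self,
        neg_zero] at hre him
      have hxre : z.re = x.1 := by simp [hzdef]
      have hxim : z.im = x.2 := by simp [hzdef]
      refine Prod.ext ?_ ?_
      · exact (hre.trans hxre).symm
      · exact (him.trans hxim).symm
  rw [hset]
  have hmeas : Measurable (fun x : ℝ × ℝ => ((x.1 : ℂ) + (x.2 : ℂ) * Complex.I)) := by
    fun_prop
  exact hmeas (((measurableSet_singleton 0).compl).inter
    (Complex.measurable_arg measurableSet_Ioo))

lemma cpow_half_eval (r θ : ℝ) (hr : 0 < r) (h1 : -Real.pi < θ) (h2 : θ < Real.pi) :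
    (((r * Real.cos θ : ℝ) : ℂ) + ((r * Real.sin θ : ℝ) : ℂ) * Complex.I) ^ (1/2 : ℂ)
      = (Real.sqrt r : ℂ) * Complex.exp ((θ : ℂ) / 2 * Complex.I) := by
  have hzeq : ((r * Real.cos θ : ℝ) : ℂ) + ((r * Real.sin θ : ℝ) : ℂ) * Complex.I
      = (r : ℂ) * (Real.cos θ + Real.sin θ * Complex.I) := by push_cast; ring
  rw [hzeq]
  have habs : ‖(r:ℂ) * (Real.cos θ + Real.sin θ * Complex.I)‖ = r := by
    rw [norm_mul, Complex.norm_real, Real.norm_eq_abs, Complex.ofReal_cos, Complex.ofReal_sin,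
      Complex.norm_cos_add_sin_mul_I, abs_of_pos hr, mul_one]
  have hz0 : (r:ℂ) * (Real.cos θ + Real.sin θ * Complex.I) ≠ 0 := by
    intro h; rw [h] at habs; simp at habs; exact hr.ne' habs.symm
  have harg : Complex.arg ((r:ℂ) * ((Real.cos θ : ℂ) + (Real.sin θ : ℂ) * Complex.I)) = θ := by
    rw [Complex.arg_real_mul _ hr, Complex.ofReal_cos, Complex.ofReal_sin,
      Complex.arg_cos_add_sin_mul_I ⟨h1, h2.le⟩]
  rw [Complex.cpow_def_of_ne_zero hz0]
  have hlog : Complex.log ((r:ℂ) * ((Real.cos θ : ℂ) + (Real.sin θ : ℂ) * Complex.I))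
      = (Real.log r : ℂ) + (θ:ℂ) * Complex.I := by
    apply Complex.ext
    · rw [Complex.log_re, habs]; simp
    · rw [Complex.log_im, harg]; simp
  rw [hlog, add_mul, Complex.exp_add]
  congr 1
  · rw [show ((Real.log r : ℝ) : ℂ) * (1/2 : ℂ) = ((Real.log r / 2 : ℝ) : ℂ) by push_cast; ring]
    rw [← Complex.ofReal_exp]
    norm_cast
    rw [Real.sqrt_eq_rpow, Real.rpow_def_of_pos hr]
    congr 1
    ring
  · congr 1
    push_cast
    ring

/-- the sector integral of the CGO solution `exp(-s √z)`,
`z = x₁ + i x₂` (principal branch square root), equals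
`6 i (e^{-2iθ_M} - e^{-2iθ_m}) s^{-4}`. -/
theorem sector_integral_cgo (θm θM : ℝ) (hθm : -Real.pi < θm) (hθM : θM < Real.pi)
    (hlt : 0 < θM - θm) (hopen : θM - θm < Real.pi) (s : ℝ) (hs : 0 < s) :
    ∫ x : ℝ × ℝ in {x : ℝ × ℝ | ∃ r θ : ℝ, 0 < r ∧ θm < θ ∧ θ < θM ∧
        x = (r * Real.cos θ, r * Real.sin θ)},
      Complex.exp (-(s : ℂ) * ((x.1 : ℂ) + (x.2 : ℂ) * Complex.I) ^ (1/2 : ℂ))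
      = 6 * Complex.I *
        (Complex.exp (-2 * (θM : ℂ) * Complex.I) - Complex.exp (-2 * (θm : ℂ) * Complex.I)) /
        (s : ℂ) ^ 4 := by
  have hπ := Real.pi_pos
  have hθmM : θm < θM := by linarith
  set S : Set (ℝ × ℝ) := {x : ℝ × ℝ | ∃ r θ : ℝ, 0 < r ∧ θm < θ ∧ θ < θM ∧
        x = (r * Real.cos θ, r * Real.sin θ)} with hSdef
  set g : ℝ × ℝ → ℂ := fun x =>
    Complex.exp (-(s : ℂ) * ((x.1 : ℂ) + (x.2 : ℂ) * Complex.I) ^ (1/2 : ℂ)) with hg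
  have hSmeas : MeasurableSet S := sector_measurable θm θM hθm hθM hθmM
  set wf : ℝ → ℂ := fun θ => (s : ℂ) * Complex.exp ((θ:ℂ)/2 * Complex.I) with hwf
  set f2 : ℝ × ℝ → ℂ := fun p => (p.1 : ℂ) * Complex.exp (-(wf p.2 * Real.sqrt p.1)) with hf2
  have hwre' : ∀ θ : ℝ, (wf θ).re = s * Real.cos (θ/2) := by
    intro θ
    rw [hwf]
    simp only
    rw [show ((θ:ℂ)/2 * Complex.I) = ((θ/2 : ℝ):ℂ) * Complex.I by push_cast; ring]
    rw [Complex.mul_re]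
    simp only [Complex.exp_ofReal_mul_I_re, Complex.exp_ofReal_mul_I_im,
      Complex.ofReal_re, Complex.ofReal_im]
    ring
  have hwre : ∀ θ : ℝ, -Real.pi < θ → θ < Real.pi → 0 < (wf θ).re := by
    intro θ h1 h2
    rw [hwre' θ]
    exact mul_pos hs (Real.cos_pos_of_mem_Ioo ⟨by linarith, by linarith⟩)
  -- the uniform cosine bound
  set M := max |θm| |θM| with hM
  have hMθm : |θm| ≤ M := le_max_left _ _
  have hMθM : |θM| ≤ M := le_max_right _ _
  have hMπ : M < Real.pi := by
    apply max_lt <;> rw [abs_lt] <;> constructor <;> linarith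
  have hM0 : 0 ≤ M := le_trans (abs_nonneg θm) hMθm
  set c := Real.cos (M/2) with hc
  have hc0 : 0 < c := Real.cos_pos_of_mem_Ioo ⟨by linarith, by linarith⟩
  have hcos : ∀ θ : ℝ, θm ≤ θ → θ ≤ θM → c ≤ Real.cos (θ/2) := by
    intro θ ha hb
    rw [← Real.cos_abs (θ/2), hc]
    apply Real.cos_le_cos_of_nonneg_of_le_pi (abs_nonneg _) (by linarith)
    have h1 : |θ| ≤ M := by
      rw [abs_le]
      constructor
      · linarith [neg_abs_le θm]
      · linarith [le_abs_self θM]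
    calc |θ/2| = |θ|/2 := by rw [abs_div]; norm_num
      _ ≤ M/2 := by linarith
  -- integrability
  have hbre : (0:ℝ) < (((s*c : ℝ):ℂ)).re := by simpa using mul_pos hs hc0
  have hb1 : IntegrableOn (fun r : ℝ => r * Real.exp (-(s*c*Real.sqrt r))) (Ioi 0) := by
    have h : IntegrableOn (fun r : ℝ => ‖(r:ℂ) * Complex.exp (-(((s*c : ℝ):ℂ) * Real.sqrt r))‖)
        (Ioi 0) := (integrableOn_mul_exp_sqrt hbre).norm
    refine h.congr_fun ?_ measurableSet_Ioi
    intro x hx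
    rw [mem_Ioi] at hx
    simp only [norm_mul, Complex.norm_real, Real.norm_eq_abs, abs_of_pos hx,
      Complex.norm_exp]
    congr 1
    simp [Complex.mul_re]
  have hfin : IsFiniteMeasure (volume.restrict (Ioo θm θM)) := by
    constructor
    rw [Measure.restrict_apply_univ]
    simp [Real.volume_Ioo]
  have hbprod : Integrable (fun p : ℝ × ℝ => (p.1 * Real.exp (-(s*c*Real.sqrt p.1))) * 1)
      ((volume.restrict (Ioi (0:ℝ))).prod (volume.restrict (Ioo θm θM))) :=
    hb1.mul_prod (integrable_const 1)
  have hint : Integrable f2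
      ((volume.restrict (Ioi (0:ℝ))).prod (volume.restrict (Ioo θm θM))) := by
    refine Integrable.mono' hbprod ?_ ?_
    · apply Continuous.aestronglyMeasurable
      rw [hf2, hwf]
      fun_prop
    · rw [Measure.prod_restrict]
      filter_upwards [ae_restrict_mem (measurableSet_Ioi.prod measurableSet_Ioo)] with p hp
      obtain ⟨hp1, hp2⟩ := hp
      rw [mem_Ioi] at hp1
      rw [mem_Ioo] at hp2
      rw [hf2]
      simp only [mul_one, norm_mul, Complex.norm_real, Real.norm_eq_abs, abs_of_pos hp1,
        Complex.norm_exp]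
      gcongr
      have hre2 : (-(wf p.2 * (Real.sqrt p.1 : ℂ))).re = -((wf p.2).re * Real.sqrt p.1) := by
        simp [Complex.mul_re]
      rw [hre2, hwre']
      have := hcos p.2 hp2.1.le hp2.2.le
      have hsq : (0:ℝ) ≤ Real.sqrt p.1 := Real.sqrt_nonneg _
      rw [neg_le_neg_iff]
      calc s*c*Real.sqrt p.1 ≤ s * Real.cos (p.2/2) * Real.sqrt p.1 := by
            apply mul_le_mul_of_nonneg_right ?_ hsq
            exact mul_le_mul_of_nonneg_left this hs.le
        _ = s * Real.cos (p.2/2) * Real.sqrt p.1 := rfl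
  have hPsub : (Ioi (0:ℝ) ×ˢ Ioo θm θM) ⊆ polarCoord.target := by
    rw [polarCoord_target]
    exact prod_mono Subset.rfl (fun θ hθ => ⟨by linarith [hθ.1], by linarith [hθ.2]⟩)
  have hPmeas : MeasurableSet (Ioi (0:ℝ) ×ˢ Ioo θm θM) :=
    measurableSet_Ioi.prod measurableSet_Ioo
  calc ∫ x in S, g x
      = ∫ p, (S.indicator g) p := (integral_indicator hSmeas).symm
    _ = ∫ p in polarCoord.target, p.1 • (S.indicator g) (polarCoord.symm p) :=
        (integral_comp_polarCoord_symm (S.indicator g)).symm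
    _ = ∫ p in polarCoord.target,
          (Ioi (0:ℝ) ×ˢ Ioo θm θM).indicator f2 p := by
        apply setIntegral_congr_fun polarCoord.open_target.measurableSet
        intro p hp
        rw [polarCoord_target] at hp
        obtain ⟨hp1, hp2⟩ := hp
        rw [mem_Ioi] at hp1
        by_cases hmm : p.2 ∈ Ioo θm θM
        · have hpP : p ∈ Ioi (0:ℝ) ×ˢ Ioo θm θM := Set.mem_prod.mpr ⟨hp1, hmm⟩
          rw [Set.indicator_of_mem hpP]
          show p.1 • S.indicator g (polarCoord.symm p) = f2 p
          rw [Set.indicator_of_mem]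
          · rw [polarCoord_symm_apply, hg, hf2]
            simp only
            rw [cpow_half_eval p.1 p.2 hp1 hp2.1 hp2.2]
            rw [real_smul]
            congr 1
            rw [hwf]
            ring
          · rw [polarCoord_symm_apply, hSdef]
            exact (sector_mem_iff θm θM hθm hθM p.1 p.2 hp1 hp2.1 hp2.2).mpr
              ⟨hmm.1, hmm.2⟩
        · have hpP : p ∉ Ioi (0:ℝ) ×ˢ Ioo θm θM := fun h => hmm (Set.mem_prod.mp h).2
          rw [Set.indicator_of_notMem hpP]
          show p.1 • S.indicator g (polarCoord.symm p) = 0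
          rw [Set.indicator_of_notMem, smul_zero]
          rw [polarCoord_symm_apply, hSdef]
          intro hmem'
          exact hmm ((sector_mem_iff θm θM hθm hθM p.1 p.2 hp1 hp2.1 hp2.2).mp hmem')
    _ = ∫ p in polarCoord.target ∩ (Ioi (0:ℝ) ×ˢ Ioo θm θM), f2 p :=
        setIntegral_indicator hPmeas
    _ = ∫ p in (Ioi (0:ℝ) ×ˢ Ioo θm θM), f2 p := by
        rw [inter_eq_self_of_subset_right hPsub]
    _ = ∫ θ in Ioo θm θM, ∫ r in Ioi (0:ℝ), f2 (r, θ) := by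
        rw [Measure.volume_eq_prod, ← Measure.prod_restrict]
        exact integral_prod_symm f2 hint
    _ = ∫ θ in Ioo θm θM, (12 / (s:ℂ)^4) * Complex.exp ((-2 * Complex.I) * (θ:ℂ)) := by
        apply setIntegral_congr_fun measurableSet_Ioo
        intro θ hθ
        rw [mem_Ioo] at hθ
        simp only [hf2]
        rw [integral_mul_exp_sqrt (hwre θ (by linarith [hθ.1]) (by linarith [hθ.2]))]
        rw [hwf]
        simp only
        rw [mul_pow, ← Complex.exp_nat_mul]
        rw [show ((4:ℕ):ℂ) * ((θ:ℂ)/2 * Complex.I) = 2*(θ:ℂ)*Complex.I by push_cast; ring]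
        rw [show (-2 * Complex.I) * (θ:ℂ) = -(2*(θ:ℂ)*Complex.I) by ring, Complex.exp_neg]
        rw [division_def, division_def, mul_inv]
        ring
    _ = (12 / (s:ℂ)^4) * ∫ θ in Ioo θm θM, Complex.exp ((-2 * Complex.I) * (θ:ℂ)) :=
        integral_const_mul _ _
    _ = (12 / (s:ℂ)^4) * ((Complex.exp ((-2*Complex.I) * (θM:ℂ))
          - Complex.exp ((-2*Complex.I) * (θm:ℂ))) / (-2*Complex.I)) := by
        rw [← MeasureTheory.integral_Ioc_eq_integral_Ioo,
          ← intervalIntegral.integral_of_le hθmM.le]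
        rw [integral_exp_mul_complex (by simp : (-2*Complex.I : ℂ) ≠ 0)]
    _ = 6 * Complex.I *
        (Complex.exp (-2 * (θM : ℂ) * Complex.I) - Complex.exp (-2 * (θm : ℂ) * Complex.I)) /
        (s : ℂ) ^ 4 := by
        rw [show (-2*Complex.I) * (θM:ℂ) = -2 * (θM:ℂ) * Complex.I by ring]
        rw [show (-2*Complex.I) * (θm:ℂ) = -2 * (θm:ℂ) * Complex.I by ring]
        have hs4 : ((s:ℂ))^4 ≠ 0 := pow_ne_zero _ (Complex.ofReal_ne_zero.mpr hs.ne')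
        have hI : (-2*Complex.I : ℂ) ≠ 0 := by simp
        field_simp
        ring_nf
        simp [Complex.I_sq]
end

section
/- Let −π < θ_m < θ_M < π with 0 < θ_M − θ_m < π, and let K = {(r cos θ, r sin θ) ∈ ℝ² : r > 0, θ_m < θ < θ_M}. Then for every s > 0, h > 0 and α > 0, ∫_K |exp(−s√(x₁ + i x₂))| · |x|^α dx ≤ 2 (θ_M − θ_m) Γ(2α + 4) δ_K^{−(2α+4)} s^{−(2α+4)}, where δ_K = min_{θ_m ≤ θ ≤ θ_M} cos(θ/2) > 0 and Γ is the Gamma function. -/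
open MeasureTheory

open Set Real in
private lemma sector_aux_integrable {q b : ℝ} (hq : -1 < q) (hb : 0 < b) :
    IntegrableOn (fun x : ℝ => x ^ q * Real.exp (-b * x ^ (1/2 : ℝ))) (Ioi 0) := by
  rw [← integrableOn_Ioi_comp_rpow_iff _ (two_ne_zero (α := ℝ))]
  have h2 : IntegrableOn (fun x : ℝ => x ^ (2*q+1) * Real.exp (-b * x ^ (1:ℝ))) (Ioi 0) :=
    integrableOn_rpow_mul_exp_neg_mul_rpow (by linarith) zero_lt_one hb
  refine IntegrableOn.congr_fun (h2.const_mul 2) (fun x hx => ?_) measurableSet_Ioi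
  have hx : (0:ℝ) < x := hx
  simp only [smul_eq_mul]
  rw [← rpow_mul hx.le, ← rpow_mul hx.le]
  norm_num
  rw [show (2:ℝ)*q+1 = 1 + 2*q by ring, rpow_add hx, rpow_one]
  ring

open Set Real in
private lemma sector_aux_value {q b : ℝ} (hq : -1 < q) (hb : 0 < b) :
    ∫ x in Ioi (0:ℝ), x ^ q * Real.exp (-b * x ^ (1/2:ℝ))
      = b ^ (-(2*q+2)) * 2 * Real.Gamma (2*q+2) := by
  rw [integral_rpow_mul_exp_neg_mul_rpow (by norm_num) hq hb,
    show -(q+1)/(1/2:ℝ) = -(2*q+2) by ring, show (q+1)/(1/2:ℝ) = 2*q+2 by ring]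
  ring

open Set Real in
private lemma sector_key_identity (θm θM s α r θ : ℝ) (hθm : -Real.pi < θm)
    (hθM : θM < Real.pi) (hr : 0 < r) (hθ1 : θm < θ) (hθ2 : θ < θM) :
    r * (‖Complex.exp (-(s : ℂ) *
        (((r * Real.cos θ : ℝ) : ℂ) + ((r * Real.sin θ : ℝ) : ℂ) * Complex.I) ^ (1/2 : ℂ))‖
      * Real.sqrt ((r * Real.cos θ) ^ 2 + (r * Real.sin θ) ^ 2) ^ α)
      = r ^ (α + 1) * Real.exp (-(s * Real.cos (θ / 2)) * r ^ (1/2 : ℝ)) := by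
  have hθm' : -Real.pi < θ := by linarith
  have hθM' : θ < Real.pi := by linarith
  set z : ℂ := ((r * Real.cos θ : ℝ) : ℂ) + ((r * Real.sin θ : ℝ) : ℂ) * Complex.I with hz
  have hzeq : z = (r : ℂ) * (Complex.cos θ + Complex.sin θ * Complex.I) := by
    rw [hz]
    push_cast [Complex.ofReal_cos, Complex.ofReal_sin]
    ring
  have habs : ‖z‖ = r := by
    rw [hzeq, norm_mul, Complex.norm_cos_add_sin_mul_I, Complex.norm_of_nonneg hr.le,
      mul_one]
  have hz0 : z ≠ 0 := by
    intro h0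
    rw [h0, norm_zero] at habs
    exact hr.ne habs
  have harg : Complex.arg z = θ := by
    rw [hzeq, ← Complex.ofReal_cos, ← Complex.ofReal_sin]
    rw [Complex.arg_real_mul _ hr]
    rw [Complex.ofReal_cos, Complex.ofReal_sin]
    exact Complex.arg_cos_add_sin_mul_I ⟨hθm', hθM'.le⟩
  have hsq : Real.sqrt ((r * Real.cos θ) ^ 2 + (r * Real.sin θ) ^ 2) = r := by
    have he : (r * Real.cos θ) ^ 2 + (r * Real.sin θ) ^ 2 = r ^ 2 := by
      have := Real.sin_sq_add_cos_sq θ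
      nlinarith
    rw [he, Real.sqrt_sq hr.le]
  have hre : (-(s : ℂ) * z ^ (1/2 : ℂ)).re
      = -(s * Real.cos (θ / 2)) * r ^ (1/2 : ℝ) := by
    have h12 : (1/2 : ℂ) = ((1/2 : ℝ) : ℂ) := by norm_num
    rw [Complex.cpow_def_of_ne_zero hz0, h12]
    simp only [Complex.mul_re, Complex.neg_re, Complex.ofReal_re, Complex.neg_im,
      Complex.ofReal_im, Complex.exp_re, Complex.mul_im, Complex.log_re, Complex.log_im,
      habs, harg, neg_zero, zero_mul, sub_zero, add_zero, mul_zero]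
    rw [Real.rpow_def_of_pos hr]
    ring_nf
  rw [Complex.norm_exp, hre, hsq, Real.rpow_add hr, Real.rpow_one]
  ring

/-- the weighted sector integral estimate for the CGO solution:
`∫_K |exp(-s √z)| |x|^α dx ≤ 2 (θ_M - θ_m) Γ(2α+4) δ_K^{-(2α+4)} s^{-(2α+4)}`
where `δ_K = min_{θ_m ≤ θ ≤ θ_M} cos(θ/2) > 0`. -/
theorem sector_integral_cgo_estimate (θm θM : ℝ) (hθm : -Real.pi < θm) (hθM : θM < Real.pi)
    (hlt : 0 < θM - θm) (hopen : θM - θm < Real.pi)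
    (δK : ℝ) (hδK : IsLeast ((fun θ => Real.cos (θ / 2)) '' Set.Icc θm θM) δK)
    (hδKpos : 0 < δK)
    (s : ℝ) (hs : 0 < s) (h : ℝ) (hh : 0 < h) (α : ℝ) (hα : 0 < α) :
    ∫ x : ℝ × ℝ in {x : ℝ × ℝ | ∃ r θ : ℝ, 0 < r ∧ θm < θ ∧ θ < θM ∧
        x = (r * Real.cos θ, r * Real.sin θ)},
      ‖Complex.exp (-(s : ℂ) * ((x.1 : ℂ) + (x.2 : ℂ) * Complex.I) ^ (1/2 : ℂ))‖
        * Real.sqrt (x.1 ^ 2 + x.2 ^ 2) ^ α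
      ≤ 2 * (θM - θm) * Real.Gamma (2 * α + 4) * δK ^ (-(2 * α + 4)) * s ^ (-(2 * α + 4)) := by
  open Set Real in
  set F : ℝ × ℝ → ℝ := fun x =>
    ‖Complex.exp (-(s : ℂ) * ((x.1 : ℂ) + (x.2 : ℂ) * Complex.I) ^ (1/2 : ℂ))‖
      * Real.sqrt (x.1 ^ 2 + x.2 ^ 2) ^ α with hF
  set S : Set (ℝ × ℝ) := {x : ℝ × ℝ | ∃ r θ : ℝ, 0 < r ∧ θm < θ ∧ θ < θM ∧
      x = (r * Real.cos θ, r * Real.sin θ)} with hSdef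
  set R : Set (ℝ × ℝ) := Set.Ioi (0:ℝ) ×ˢ Set.Ioo θm θM with hRdef
  have hRsub : R ⊆ polarCoord.target := by
    rw [polarCoord_target]
    exact Set.prod_mono_right (Set.Ioo_subset_Ioo (by linarith) (by linarith))
  have hSeq : S = polarCoord.source ∩ polarCoord ⁻¹' R := by
    ext x
    constructor
    · rintro ⟨r, θ, hr, h1, h2, rfl⟩
      have hmem : ((r, θ) : ℝ × ℝ) ∈ polarCoord.target := hRsub ⟨hr, h1, h2⟩
      have h1' : polarCoord.symm (r, θ) = (r * Real.cos θ, r * Real.sin θ) := rfl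
      refine ⟨h1' ▸ polarCoord.map_target hmem, ?_⟩
      have h2' := polarCoord.right_inv hmem
      rw [h1'] at h2'
      simp only [Set.mem_preimage, h2']
      exact ⟨hr, h1, h2⟩
    · rintro ⟨hx, hx2⟩
      obtain ⟨hm1, hm2, hm3⟩ : (polarCoord x).1 ∈ Set.Ioi (0:ℝ) ∧ θm < (polarCoord x).2 ∧
          (polarCoord x).2 < θM := ⟨hx2.1, hx2.2.1, hx2.2.2⟩
      refine ⟨(polarCoord x).1, (polarCoord x).2, hm1, hm2, hm3, ?_⟩
      conv_lhs => rw [← polarCoord.left_inv hx]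
      rfl
  have hSopen : IsOpen S := by
    rw [hSeq]
    exact polarCoord.continuousOn.isOpen_inter_preimage polarCoord.open_source
      (isOpen_Ioi.prod isOpen_Ioo)
  have hSmeas : MeasurableSet S := hSopen.measurableSet
  have hRmeas : MeasurableSet R := (isOpen_Ioi.prod isOpen_Ioo).measurableSet
  -- change of variables to polar coordinates
  have step1 : ∫ x in S, F x = ∫ p in R, p.1 * F (polarCoord.symm p) := by
    rw [← integral_indicator hSmeas, ← integral_comp_polarCoord_symm (Set.indicator S F)]
    have hre : ∫ p in R, p.1 * F (polarCoord.symm p)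
        = ∫ p in polarCoord.target,
            R.indicator (fun p : ℝ × ℝ => p.1 * F (polarCoord.symm p)) p := by
      rw [setIntegral_indicator hRmeas, Set.inter_eq_self_of_subset_right hRsub]
    rw [hre]
    refine setIntegral_congr_fun polarCoord.open_target.measurableSet (fun p hp => ?_)
    by_cases hpR : p ∈ R
    · rw [Set.indicator_of_mem hpR, Set.indicator_of_mem, smul_eq_mul]
      rw [hSeq]
      exact ⟨polarCoord.map_target hp, by
        simp only [Set.mem_preimage, polarCoord.right_inv hp]; exact hpR⟩
    · rw [Set.indicator_of_notMem hpR, Set.indicator_of_notMem, smul_zero]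
      intro hmem
      rw [hSeq] at hmem
      have hmem2 := hmem.2
      rw [Set.mem_preimage, polarCoord.right_inv hp] at hmem2
      exact hpR hmem2
  -- the polar-coordinate expression of the integrand
  have key : ∀ p : ℝ × ℝ, p ∈ R → p.1 * F (polarCoord.symm p)
      = p.1 ^ (α + 1) * Real.exp (-(s * Real.cos (p.2 / 2)) * p.1 ^ (1/2 : ℝ)) := by
    rintro ⟨r, θ⟩ ⟨hr, hθ1, hθ2⟩
    have hr : (0:ℝ) < r := hr
    have hθ1 : θm < θ := hθ1
    have hθ2 : θ < θM := hθ2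
    have hsymm : polarCoord.symm (r, θ) = (r * Real.cos θ, r * Real.sin θ) := rfl
    rw [hsymm, hF]
    exact sector_key_identity θm θM s α r θ hθm hθM hr hθ1 hθ2
  set b : ℝ := s * δK with hb
  have hbpos : 0 < b := mul_pos hs hδKpos
  set H : ℝ × ℝ → ℝ := fun p => p.1 ^ (α+1) * Real.exp (-b * p.1 ^ (1/2:ℝ)) with hH
  have hInt : IntegrableOn H R := by
    rw [hRdef]
    have h1 : IntegrableOn (fun x : ℝ => x ^ (α+1) * Real.exp (-b * x ^ (1/2:ℝ)))
        (Set.Ioi 0) := sector_aux_integrable (by linarith) hbpos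
    have h2 : IntegrableOn (fun _ : ℝ => (1:ℝ)) (Set.Ioo θm θM) := by
      refine (integrableOn_const_iff).mpr (Or.inr ?_)
      simp [Real.volume_Ioo]
    have h3 := h1.mul_prod h2
    rw [Measure.prod_restrict] at h3
    unfold IntegrableOn
    rw [Measure.volume_eq_prod]
    exact h3.congr (Filter.Eventually.of_forall fun p => by simp [hH])
  have step2 : ∫ p in R, p.1 * F (polarCoord.symm p) ≤ ∫ p in R, H p := by
    refine integral_mono_of_nonneg ?_ hInt ?_
    · filter_upwards [ae_restrict_mem hRmeas] with p hp
      have hp1 : (0:ℝ) < p.1 := hp.1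
      have hFnn : 0 ≤ F (polarCoord.symm p) :=
        mul_nonneg (norm_nonneg _) (Real.rpow_nonneg (Real.sqrt_nonneg _) _)
      exact mul_nonneg hp1.le hFnn
    · filter_upwards [ae_restrict_mem hRmeas] with p hp
      rw [key p hp, hH]
      have hp1 : (0:ℝ) < p.1 := hp.1
      have hδle : δK ≤ Real.cos (p.2/2) := hδK.2 ⟨p.2, ⟨hp.2.1.le, hp.2.2.le⟩, rfl⟩
      refine mul_le_mul_of_nonneg_left (Real.exp_le_exp.mpr ?_) (Real.rpow_nonneg hp1.le _)
      have hpw : 0 ≤ p.1 ^ (1/2:ℝ) := Real.rpow_nonneg hp1.le _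
      rw [hb]
      nlinarith [mul_le_mul_of_nonneg_right hδle hpw, mul_le_mul_of_nonneg_left
        (mul_le_mul_of_nonneg_right hδle hpw) hs.le]
  have step3 : ∫ p in R, H p
      = ((s*δK) ^ (-(2*α+4)) * 2 * Real.Gamma (2*α+4)) * (θM - θm) := by
    have e1 : ∫ p in R, H p
        = ∫ p in Set.Ioi (0:ℝ) ×ˢ Set.Ioo θm θM,
            (fun x : ℝ => x ^ (α+1) * Real.exp (-b * x ^ (1/2:ℝ))) p.1
              * (fun _ : ℝ => (1:ℝ)) p.2 := by
      rw [hRdef]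
      simp [hH]
    have e2 : (∫ p : ℝ × ℝ in Set.Ioi (0:ℝ) ×ˢ Set.Ioo θm θM,
          (fun x : ℝ => x ^ (α+1) * Real.exp (-b * x ^ (1/2:ℝ))) p.1
            * (fun _ : ℝ => (1:ℝ)) p.2 ∂(volume : Measure ℝ).prod volume)
        = (∫ x in Set.Ioi (0:ℝ), x ^ (α+1) * Real.exp (-b * x ^ (1/2:ℝ)))
            * ∫ _ in Set.Ioo θm θM, (1:ℝ) :=
      setIntegral_prod_mul (fun x : ℝ => x ^ (α+1) * Real.exp (-b * x ^ (1/2:ℝ)))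
        (fun _ : ℝ => (1:ℝ)) _ _
    rw [e1, Measure.volume_eq_prod, e2,
      sector_aux_value (by linarith) hbpos, setIntegral_const]
    simp only [Real.volume_real_Ioo_of_le (by linarith : θm ≤ θM), Real.volume_Ioo, smul_eq_mul, mul_one, ENNReal.toReal_ofReal hlt.le]
    rw [hb, show 2*(α+1)+2 = 2*α+4 by ring]
  rw [step1]
  refine step2.trans ?_
  rw [step3, Real.mul_rpow hs.le hδKpos.le]
  exact le_of_eq (by ring)
end

section
/- Let −π < θ_m < θ_M < π with 0 < θ_M − θ_m < π, let K = {(r cos θ, r sin θ) ∈ ℝ² : r > 0, θ_m < θ < θ_M}, and for h > 0 let C_h = K ∩ B_h(0) be the truncated sector, where B_h(0) is the open disk of radius h centered at the origin. Let u₀(x) = (exp(−s√z), i exp(−s√z)) ∈ ℂ² with z = x₁ + i x₂ (principal square root). Then for every α > 0 and s > 0, ( ∫_{C_h} |x|^{2α} ‖u₀(x)‖² dx )^{1/2} ≤ s^{−2(α+1)} · 2 √( (θ_M − θ_m) Γ(4α + 4) ) / (2 δ_K)^{2α+2}, where ‖·‖ is the Euclidean norm on ℂ² and δ_K = min_{θ_m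 ≤ θ ≤ θ_M} cos(θ/2). -/
open MeasureTheory Set

/-- Pointwise rewriting of the CGO integrand into a real closed form. -/
lemma cgo_point (s α : ℝ) (x : ℝ × ℝ) :
    Real.sqrt (x.1 ^ 2 + x.2 ^ 2) ^ (2 * α) *
      (‖Complex.exp
          (-(s : ℂ) * ((x.1 : ℂ) + (x.2 : ℂ) * Complex.I) ^ (1/2 : ℂ))‖ ^ 2 +
       ‖Complex.I * Complex.exp
          (-(s : ℂ) * ((x.1 : ℂ) + (x.2 : ℂ) * Complex.I) ^ (1/2 : ℂ))‖ ^ 2)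
    = 2 * Real.sqrt (x.1 ^ 2 + x.2 ^ 2) ^ (2 * α) *
        Real.exp (-(2*s) * Real.sqrt ((Real.sqrt (x.1 ^ 2 + x.2 ^ 2) + x.1)/2)) := by
  have hre : (-(s : ℂ) * ((x.1 : ℂ) + (x.2 : ℂ) * Complex.I) ^ (1/2 : ℂ)).re
      = -(s * Real.sqrt ((Real.sqrt (x.1 ^ 2 + x.2 ^ 2) + x.1)/2)) := by
    rw [neg_mul, Complex.neg_re, Complex.re_ofReal_mul, one_div, Complex.cpow_inv_two_re,
      Complex.norm_def, Complex.normSq_add_mul_I]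
    norm_num
  rw [norm_mul, Complex.norm_I, one_mul, Complex.norm_exp, hre]
  have h2 : ∀ t : ℝ, Real.exp t ^ 2 + Real.exp t ^ 2 = 2 * Real.exp (2 * t) := by
    intro t
    rw [sq, ← Real.exp_add, two_mul t, two_mul]
  rw [h2]
  rw [show 2 * -(s * Real.sqrt ((Real.sqrt (x.1 ^ 2 + x.2 ^ 2) + x.1)/2))
      = -(2*s) * Real.sqrt ((Real.sqrt (x.1 ^ 2 + x.2 ^ 2) + x.1)/2) by ring]
  ring

/-- 1D integrability of the radial majorant (with the polar Jacobian factor). -/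
lemma cgo_int_1d {α c : ℝ} (hα : 0 < α) (hc : 0 < c) :
    IntegrableOn (fun r : ℝ => r * (2 * r ^ (2*α) * Real.exp (-c * Real.sqrt r))) (Ioi 0) := by
  have base : IntegrableOn (fun x : ℝ => x ^ (4*α+3) * Real.exp (-c * x)) (Ioi 0) := by
    have := integrableOn_rpow_mul_exp_neg_mul_rpow (s := 4*α+3) (p := 1) (by linarith) zero_lt_one hc
    simpa [Real.rpow_one] using this
  have lhs_int : IntegrableOn (fun x : ℝ =>
      (|(2:ℝ)| * x ^ ((2:ℝ) - 1)) •
        ((x ^ (2:ℝ)) ^ (2*α+1) * Real.exp (-c * Real.sqrt (x ^ (2:ℝ))))) (Ioi 0) := by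
    refine IntegrableOn.congr_fun (base.const_mul 2) (fun x hx => ?_) measurableSet_Ioi
    have hx' : (0:ℝ) < x := hx
    rw [smul_eq_mul, abs_of_pos (by norm_num : (0:ℝ) < 2),
      show (2:ℝ) - 1 = 1 by norm_num, Real.rpow_one,
      Real.sqrt_eq_rpow, ← Real.rpow_mul hx'.le, ← Real.rpow_mul hx'.le,
      show (2:ℝ) * (2*α+1) = 4*α+2 by ring,
      show (2:ℝ) * (1/2) = 1 by norm_num, Real.rpow_one,
      show (4*α+3 : ℝ) = (4*α+2) + 1 by ring, Real.rpow_add hx', Real.rpow_one]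
    ring
  have key : IntegrableOn (fun y : ℝ => y ^ (2*α+1) * Real.exp (-c * Real.sqrt y)) (Ioi 0) :=
    (integrableOn_Ioi_comp_rpow_iff _ (two_ne_zero)).1 lhs_int
  refine IntegrableOn.congr_fun (key.const_mul 2) (fun r hr => ?_) measurableSet_Ioi
  have hr' : (0:ℝ) < r := hr
  rw [show (2*α+1 : ℝ) = 2*α + 1 from rfl, Real.rpow_add hr', Real.rpow_one]
  ring

/-- the weighted `L²` estimate on the truncated sector
`C_h = K ∩ B_h(0)` for the CGO solution `u₀ = (exp(-s√z), i exp(-s√z))`: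
`(∫_{C_h} |x|^{2α} ‖u₀‖² dx)^{1/2} ≤ s^{-2(α+1)} · 2√((θ_M-θ_m) Γ(4α+4)) / (2δ_K)^{2α+2}`. -/
theorem truncated_sector_L2_estimate (θm θM : ℝ) (hθm : -Real.pi < θm) (hθM : θM < Real.pi)
    (hlt : 0 < θM - θm) (hopen : θM - θm < Real.pi)
    (δK : ℝ) (hδK : IsLeast ((fun θ => Real.cos (θ / 2)) '' Set.Icc θm θM) δK)
    (hδKpos : 0 < δK)
    (h : ℝ) (hh : 0 < h) (α : ℝ) (hα : 0 < α) (s : ℝ) (hs : 0 < s) :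
    Real.sqrt (∫ x : ℝ × ℝ in
        {x : ℝ × ℝ | ∃ r θ : ℝ, 0 < r ∧ θm < θ ∧ θ < θM ∧
          x = (r * Real.cos θ, r * Real.sin θ)} ∩
        {x : ℝ × ℝ | Real.sqrt (x.1 ^ 2 + x.2 ^ 2) < h},
        Real.sqrt (x.1 ^ 2 + x.2 ^ 2) ^ (2 * α) *
          (‖Complex.exp
              (-(s : ℂ) * ((x.1 : ℂ) + (x.2 : ℂ) * Complex.I) ^ (1/2 : ℂ))‖ ^ 2 +
           ‖Complex.I * Complex.exp
              (-(s : ℂ) * ((x.1 : ℂ) + (x.2 : ℂ) * Complex.I) ^ (1/2 : ℂ))‖ ^ 2))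
      ≤ s ^ (-(2 * (α + 1))) * (2 * Real.sqrt ((θM - θm) * Real.Gamma (4 * α + 4))) /
          (2 * δK) ^ (2 * α + 2) := by
  simp only [cgo_point s α]
  set c : ℝ := 2 * s * δK with hc_def
  have hc : 0 < c := by positivity
  set g : ℝ → ℝ := fun r => 2 * r ^ (2*α) * Real.exp (-c * Real.sqrt r) with hg_def
  set G : ℝ × ℝ → ℝ := fun x => g (Real.sqrt (x.1 ^ 2 + x.2 ^ 2)) with hG_def
  set Fc : ℝ × ℝ → ℝ := fun x => 2 * Real.sqrt (x.1 ^ 2 + x.2 ^ 2) ^ (2 * α) *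
        Real.exp (-(2*s) * Real.sqrt ((Real.sqrt (x.1 ^ 2 + x.2 ^ 2) + x.1)/2)) with hFc_def
  set S : Set (ℝ × ℝ) := {x : ℝ × ℝ | ∃ r θ : ℝ, 0 < r ∧ θm < θ ∧ θ < θM ∧
          x = (r * Real.cos θ, r * Real.sin θ)} with hS_def
  set Bh : Set (ℝ × ℝ) := {x : ℝ × ℝ | Real.sqrt (x.1 ^ 2 + x.2 ^ 2) < h} with hBh_def
  set rect : Set (ℝ × ℝ) := Ioi (0:ℝ) ×ˢ Ioo θm θM with hrect_def
  -- geometry of the sector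
  have hRect_sub : rect ⊆ polarCoord.target := by
    rintro ⟨r, θ⟩ ⟨h1, h2, h3⟩
    exact ⟨h1, lt_trans hθm h2, lt_trans h3 hθM⟩
  have hSeq : S = polarCoord.symm '' rect := by
    ext x
    constructor
    · rintro ⟨r, θ, hr, h1, h2, rfl⟩
      exact ⟨(r, θ), ⟨hr, h1, h2⟩, by simp [polarCoord_symm_apply]⟩
    · rintro ⟨⟨r, θ⟩, ⟨hr, h1, h2⟩, rfl⟩
      exact ⟨r, θ, hr, h1, h2, by simp [polarCoord_symm_apply]⟩
  have hinj : InjOn polarCoord.symm rect := by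
    have := polarCoord.symm.injOn
    rw [polarCoord.symm_source] at this
    exact this.mono hRect_sub
  have hRectm : MeasurableSet rect := measurableSet_Ioi.prod measurableSet_Ioo
  have hSm : MeasurableSet S := by
    rw [hSeq]
    exact (polarCoord.symm.isOpen_image_of_subset_source (isOpen_Ioi.prod isOpen_Ioo)
      (by rw [polarCoord.symm_source]; exact hRect_sub)).measurableSet
  have hRc : Continuous fun x : ℝ × ℝ => Real.sqrt (x.1 ^ 2 + x.2 ^ 2) :=
    ((continuous_fst.pow 2).add (continuous_snd.pow 2)).sqrt
  have hBm : MeasurableSet Bh := measurableSet_lt hRc.measurable measurable_const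
  have hrpow : Continuous fun t : ℝ => t ^ (2*α) := by
    rw [continuous_iff_continuousAt]
    exact fun t => Real.continuousAt_rpow_const t (2*α) (Or.inr (by positivity))
  have hFcc : Continuous Fc := by
    rw [hFc_def]
    refine (continuous_const.mul (hrpow.comp hRc)).mul (Real.continuous_exp.comp ?_)
    exact continuous_const.mul ((hRc.add continuous_fst).div_const 2).sqrt
  -- the derivative of the polar map
  set Bmat : ℝ × ℝ → (ℝ × ℝ →L[ℝ] ℝ × ℝ) := fun p =>
    LinearMap.toContinuousLinearMap (Matrix.toLin (Module.Basis.finTwoProd ℝ) (Module.Basis.finTwoProd ℝ)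
      !![Real.cos p.2, -p.1 * Real.sin p.2; Real.sin p.2, p.1 * Real.cos p.2]) with hBmat_def
  have hder : ∀ p ∈ rect, HasFDerivWithinAt polarCoord.symm (Bmat p) rect p :=
    fun p _ => (hasFDerivAt_polarCoord_symm p).hasFDerivWithinAt
  have hBdet : ∀ p : ℝ × ℝ, (Bmat p).det = p.1 := by
    intro p
    conv_rhs => rw [← one_mul p.1, ← Real.cos_sq_add_sin_sq p.2]
    simp only [hBmat_def, neg_mul, LinearMap.det_toContinuousLinearMap, LinearMap.det_toLin,
      Matrix.det_fin_two_of, sub_neg_eq_add]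
    ring
  have hpolarR : ∀ p : ℝ × ℝ, p ∈ rect →
      Real.sqrt ((polarCoord.symm p).1 ^ 2 + (polarCoord.symm p).2 ^ 2) = p.1 := by
    rintro ⟨r, θ⟩ ⟨h1, _, _⟩
    rw [polarCoord_symm_apply]
    simp only
    rw [mul_pow, mul_pow, ← mul_add, Real.cos_sq_add_sin_sq, mul_one, Real.sqrt_sq (le_of_lt h1)]
  have hEq : EqOn (fun p : ℝ × ℝ => |(Bmat p).det| • G (polarCoord.symm p))
      (fun p : ℝ × ℝ => p.1 * g p.1) rect := by
    intro p hp
    simp only [hBdet p, hG_def, hpolarR p hp, smul_eq_mul]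
    rw [abs_of_pos hp.1]
  -- integrability
  have h1d : IntegrableOn (fun r : ℝ => r * g r) (Ioi 0) := cgo_int_1d hα hc
  have hGrect : IntegrableOn (fun p : ℝ × ℝ => p.1 * g p.1) rect := by
    rw [IntegrableOn, hrect_def, Measure.volume_eq_prod, ← Measure.prod_restrict]
    have h2d : Integrable (fun _ : ℝ => (1:ℝ)) (volume.restrict (Ioo θm θM)) :=
      integrableOn_const (by rw [Real.volume_Ioo]; exact ENNReal.ofReal_ne_top)
    simpa using h1d.mul_prod h2d
  have hGint_S : IntegrableOn G S := by
    rw [hSeq, integrableOn_image_iff_integrableOn_abs_det_fderiv_smul volume hRectm hder hinj]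
    exact IntegrableOn.congr_fun hGrect hEq.symm hRectm
  -- value of the majorant integral
  have hIS : ∫ x in S, G x = ∫ p in rect, p.1 * g p.1 := by
    rw [hSeq, integral_image_eq_integral_abs_det_fderiv_smul volume hRectm hder hinj]
    exact setIntegral_congr_fun hRectm hEq
  have hprod : ∫ p in rect, p.1 * g p.1 = (∫ r in Ioi (0:ℝ), r * g r) * (θM - θm) := by
    rw [hrect_def, Measure.volume_eq_prod]
    have hps := setIntegral_prod_mul (μ := (volume : Measure ℝ)) (ν := (volume : Measure ℝ))
      (fun r : ℝ => r * g r) (fun _ : ℝ => (1:ℝ)) (Ioi 0) (Ioo θm θM)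
    simpa [Real.volume_Ioo, ENNReal.toReal_ofReal hlt.le, max_eq_left hlt.le] using hps
  have hval : ∫ r in Ioi (0:ℝ), r * g r = 4 * Real.Gamma (4*α+4) * c ^ (-(4*α+4)) := by
    rw [setIntegral_congr_fun measurableSet_Ioi
      (show EqOn (fun r : ℝ => r * g r)
        (fun r : ℝ => 2 * (r ^ (2*α+1) * Real.exp (-c * r ^ ((1:ℝ)/2)))) (Ioi 0) by
        intro r hr
        have hr' : (0:ℝ) < r := hr
        simp only [hg_def]
        rw [← Real.sqrt_eq_rpow, show (2*α+1 : ℝ) = 2*α + 1 from rfl, Real.rpow_add hr',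
          Real.rpow_one]
        ring)]
    rw [integral_const_mul,
      integral_rpow_mul_exp_neg_mul_rpow (by norm_num) (by linarith) hc,
      show (-(2*α+1+1)/(1/2) : ℝ) = -(4*α+4) by ring,
      show ((2*α+1+1)/(1/2) : ℝ) = 4*α+4 by ring]
    ring
  -- pointwise bound on the sector
  have hFG : ∀ x ∈ S, Fc x ≤ G x := by
    rintro x ⟨r, θ, hr, h1, h2, rfl⟩
    have hR : Real.sqrt ((r * Real.cos θ) ^ 2 + (r * Real.sin θ) ^ 2) = r := by
      rw [mul_pow, mul_pow, ← mul_add, Real.cos_sq_add_sin_sq, mul_one, Real.sqrt_sq hr.le]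
    have hδ : δK ≤ Real.cos (θ/2) := hδK.2 ⟨θ, ⟨h1.le, h2.le⟩, rfl⟩
    have hhalf : Real.cos (θ/2) = Real.sqrt ((1 + Real.cos θ)/2) :=
      Real.cos_half (by linarith) (by linarith)
    simp only [hFc_def, hG_def, hg_def, hR]
    have hsq : Real.sqrt ((r + r * Real.cos θ)/2) = Real.sqrt r * Real.cos (θ/2) := by
      rw [hhalf, ← Real.sqrt_mul hr.le]
      congr 1
      ring
    rw [hsq]
    have hexp : Real.exp (-(2*s) * (Real.sqrt r * Real.cos (θ/2))) ≤
        Real.exp (-c * Real.sqrt r) := by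
      rw [Real.exp_le_exp]
      have h0 : 0 ≤ 2 * s * Real.sqrt r := by positivity
      nlinarith [mul_le_mul_of_nonneg_left hδ h0]
    exact mul_le_mul_of_nonneg_left hexp (by positivity)
  have hFcnn : ∀ x, 0 ≤ Fc x := fun x => by simp only [hFc_def]; positivity
  have hGnn : ∀ x, 0 ≤ G x := fun x => by simp only [hG_def, hg_def]; positivity
  -- monotonicity chain
  have hGSB : IntegrableOn G (S ∩ Bh) := hGint_S.mono_set inter_subset_left
  have hFle : ∀ x ∈ S ∩ Bh, Fc x ≤ G x := fun x hx => hFG x hx.1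
  have hFcint : IntegrableOn Fc (S ∩ Bh) := by
    refine Integrable.mono hGSB hFcc.aestronglyMeasurable.restrict ?_
    refine ae_restrict_of_forall_mem (hSm.inter hBm) (fun x hx => ?_)
    rw [Real.norm_eq_abs, Real.norm_eq_abs, abs_of_nonneg (hFcnn x), abs_of_nonneg (hGnn x)]
    exact hFle x hx
  have hstep : ∫ x in S ∩ Bh, Fc x ≤ ∫ x in S, G x :=
    le_trans (setIntegral_mono_on hFcint hGSB (hSm.inter hBm) hFle)
      (setIntegral_mono_set hGint_S (Filter.Eventually.of_forall fun x => hGnn x)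
        (HasSubset.Subset.eventuallyLE inter_subset_left))
  have hI : ∫ x in S ∩ Bh, Fc x ≤ 4 * Real.Gamma (4*α+4) * c ^ (-(4*α+4)) * (θM - θm) := by
    calc ∫ x in S ∩ Bh, Fc x ≤ ∫ x in S, G x := hstep
      _ = 4 * Real.Gamma (4*α+4) * c ^ (-(4*α+4)) * (θM - θm) := by rw [hIS, hprod, hval]
  -- final algebra
  set X : ℝ := (θM - θm) * Real.Gamma (4 * α + 4) with hX_def
  have hΓ : 0 < Real.Gamma (4*α+4) := Real.Gamma_pos_of_pos (by linarith)
  have hX : 0 ≤ X := by positivity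
  set V : ℝ := 2 * Real.sqrt X * c ^ (-(2*α+2)) with hV_def
  have hVnn : 0 ≤ V := by positivity
  have hc2 : (c ^ (-(2*α+2)) : ℝ) ^ 2 = c ^ (-(4*α+4)) := by
    rw [← Real.rpow_natCast (c ^ (-(2*α+2))) 2, ← Real.rpow_mul hc.le]
    norm_num
    ring_nf
  have hTV : 4 * Real.Gamma (4*α+4) * c ^ (-(4*α+4)) * (θM - θm) = V ^ 2 := by
    have h1 : Real.sqrt X ^ 2 = X := Real.sq_sqrt hX
    rw [show V ^ 2 = 4 * Real.sqrt X ^ 2 * (c ^ (-(2*α+2))) ^ 2 by ring, h1, hc2, hX_def]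
    ring
  have hVR : s ^ (-(2 * (α + 1))) * (2 * Real.sqrt ((θM - θm) * Real.Gamma (4 * α + 4))) /
      (2 * δK) ^ (2 * α + 2) = V := by
    rw [div_eq_mul_inv, ← Real.rpow_neg (by positivity : (0:ℝ) ≤ 2 * δK),
      show (-(2 * (α + 1)) : ℝ) = -(2*α+2) by ring, hV_def, hX_def,
      show c = s * (2 * δK) by rw [hc_def]; ring,
      Real.mul_rpow hs.le (by positivity : (0:ℝ) ≤ 2 * δK)]
    ring
  calc Real.sqrt (∫ x in S ∩ Bh, Fc x) ≤ Real.sqrt (V ^ 2) :=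
        Real.sqrt_le_sqrt (by rw [← hTV]; exact hI)
    _ = V := Real.sqrt_sq hVnn
    _ = _ := hVR.symm
end

section
/- Let s > 0 and let U = ℝ² ∖ ((−∞, 0] × {0}). Define u₁(x) = exp(−s√(x₁ + i x₂)) (principal branch square root) and u₂(x) = i u₁(x) for x = (x₁, x₂) ∈ U. Then on U one has ∂₁u₁ + ∂₂u₂ = 0 and Δu₁ = Δu₂ = 0; consequently, for any real constants λ, μ, the vector field u₀ = (u₁, u₂) satisfies the Lamé system μ Δu₀ + (λ + μ) ∇(∇·u₀) = 0 componentwise on U. -/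
/-- First partial derivative (in the `x₁`-direction) of a complex-valued function on `ℝ²`. -/
noncomputable def pd1 (f : ℝ × ℝ → ℂ) (x : ℝ × ℝ) : ℂ :=
  fderiv ℝ f x (1, 0)

/-- Second partial derivative (in the `x₂`-direction) of a complex-valued function on `ℝ²`. -/
noncomputable def pd2 (f : ℝ × ℝ → ℂ) (x : ℝ × ℝ) : ℂ :=
  fderiv ℝ f x (0, 1)

/-- Laplacian `Δ = ∂₁² + ∂₂²` of a complex-valued function on `ℝ²`. -/
noncomputable def lap (f : ℝ × ℝ → ℂ) (x : ℝ × ℝ) : ℂ :=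
  pd1 (pd1 f) x + pd2 (pd2 f) x

/-- First component `u₁(x) = exp(-s √(x₁ + i x₂))` of the CGO solution
(principal branch square root). -/
noncomputable def cgoU1 (s : ℝ) (x : ℝ × ℝ) : ℂ :=
  Complex.exp (-(s : ℂ) * ((x.1 : ℂ) + (x.2 : ℂ) * Complex.I) ^ (1/2 : ℂ))

/-- Second component `u₂ = i u₁` of the CGO solution. -/
noncomputable def cgoU2 (s : ℝ) (x : ℝ × ℝ) : ℂ :=
  Complex.I * cgoU1 s x

noncomputable def Lmap : (ℝ × ℝ) →L[ℝ] ℂ := Complex.equivRealProdCLM.symm.toContinuousLinearMap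

lemma Lmap_apply (p : ℝ × ℝ) : Lmap p = (p.1 : ℂ) + (p.2 : ℂ) * Complex.I :=
  Complex.equivRealProdCLM_symm_apply p

lemma Lmap_mem (x : ℝ × ℝ) (hx : 0 < x.1 ∨ x.2 ≠ 0) : Lmap x ∈ Complex.slitPlane := by
  rw [Complex.mem_slitPlane_iff, Lmap_apply]
  simpa using hx

lemma pd_comp (g g' : ℂ → ℂ) (x : ℝ × ℝ)
    (hg : HasDerivAt g (g' (Lmap x)) (Lmap x)) :
    pd1 (fun y => g (Lmap y)) x = g' (Lmap x) ∧
    pd2 (fun y => g (Lmap y)) x = Complex.I * g' (Lmap x) := by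
  have h : HasFDerivAt (fun y => g (Lmap y))
      (((ContinuousLinearMap.smulRight (1 : ℂ →L[ℂ] ℂ) (g' (Lmap x))).restrictScalars ℝ).comp Lmap) x :=
    (hg.hasFDerivAt.restrictScalars ℝ).comp x Lmap.hasFDerivAt
  have h1 := h.fderiv
  constructor <;>
  · simp only [pd1, pd2, h1, ContinuousLinearMap.coe_comp', Function.comp_apply,
      ContinuousLinearMap.coe_restrictScalars', ContinuousLinearMap.smulRight_apply,
      ContinuousLinearMap.one_apply, smul_eq_mul]
    norm_num [Lmap_apply, mul_comm]

noncomputable def g0 (s : ℝ) (z : ℂ) : ℂ := Complex.exp (-(s : ℂ) * z ^ (1/2 : ℂ))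
noncomputable def g1 (s : ℝ) (z : ℂ) : ℂ :=
  (-(s : ℂ) * ((1/2 : ℂ) * z ^ ((1/2 : ℂ) - 1))) * g0 s z
noncomputable def g2 (s : ℝ) (z : ℂ) : ℂ :=
  (-(s : ℂ) * ((1/2 : ℂ) * (((1/2 : ℂ) - 1) * z ^ ((1/2 : ℂ) - 1 - 1)))) * g0 s z +
    (-(s : ℂ) * ((1/2 : ℂ) * z ^ ((1/2 : ℂ) - 1))) * g1 s z

lemma hasDerivAt_g0 (s : ℝ) {z : ℂ} (hz : z ∈ Complex.slitPlane) :
    HasDerivAt (g0 s) (g1 s z) z := by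
  have h1 : HasDerivAt (fun z : ℂ => z ^ (1/2 : ℂ)) ((1/2 : ℂ) * z ^ ((1/2 : ℂ) - 1)) z :=
    (Complex.hasStrictDerivAt_cpow_const hz).hasDerivAt
  have h2 := (h1.const_mul (-(s : ℂ))).cexp
  have e : g1 s z = Complex.exp (-(s : ℂ) * z ^ (1/2 : ℂ)) *
      (-(s : ℂ) * ((1/2 : ℂ) * z ^ ((1/2 : ℂ) - 1))) := by
    unfold g1 g0
    ring
  rw [e]
  exact h2

lemma hasDerivAt_g1 (s : ℝ) {z : ℂ} (hz : z ∈ Complex.slitPlane) :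
    HasDerivAt (g1 s) (g2 s z) z := by
  have h1 : HasDerivAt (fun z : ℂ => z ^ ((1/2 : ℂ) - 1))
      (((1/2 : ℂ) - 1) * z ^ ((1/2 : ℂ) - 1 - 1)) z :=
    (Complex.hasStrictDerivAt_cpow_const hz).hasDerivAt
  have hA : HasDerivAt (fun z : ℂ => -(s : ℂ) * ((1/2 : ℂ) * z ^ ((1/2 : ℂ) - 1)))
      (-(s : ℂ) * ((1/2 : ℂ) * (((1/2 : ℂ) - 1) * z ^ ((1/2 : ℂ) - 1 - 1)))) z :=
    (h1.const_mul (1/2 : ℂ)).const_mul (-(s : ℂ))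
  exact hA.mul (hasDerivAt_g0 s hz)

lemma cgoU1_eq (s : ℝ) : cgoU1 s = fun y => g0 s (Lmap y) := by
  funext y; simp [cgoU1, g0, Lmap_apply]

lemma cgoU2_eq (s : ℝ) : cgoU2 s = fun y => Complex.I * g0 s (Lmap y) := by
  funext y; simp [cgoU2, cgoU1_eq]

lemma isOpen_U : IsOpen {x : ℝ × ℝ | 0 < x.1 ∨ x.2 ≠ 0} := by
  have : {x : ℝ × ℝ | 0 < x.1 ∨ x.2 ≠ 0} = Lmap ⁻¹' Complex.slitPlane := by
    ext x
    simp only [Set.mem_setOf_eq, Set.mem_preimage, Complex.mem_slitPlane_iff, Lmap_apply]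
    simp
  rw [this]
  exact Complex.isOpen_slitPlane.preimage Lmap.continuous

/-- on `U = ℝ² ∖ ((-∞,0] × {0})` one has `∂₁u₁ + ∂₂u₂ = 0` and
`Δu₁ = Δu₂ = 0`; consequently, for any real `λ, μ`, the CGO field `u₀ = (u₁, u₂)`
satisfies the Lamé system `μ Δu₀ + (λ+μ) ∇(∇·u₀) = 0` componentwise on `U`. -/
theorem cgo_solves_lame (s lam mu : ℝ) (hs : 0 < s) :
    ∀ x : ℝ × ℝ, (0 < x.1 ∨ x.2 ≠ 0) →
      pd1 (cgoU1 s) x + pd2 (cgoU2 s) x = 0 ∧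
      lap (cgoU1 s) x = 0 ∧
      lap (cgoU2 s) x = 0 ∧
      (mu : ℂ) * lap (cgoU1 s) x +
        ((lam : ℂ) + (mu : ℂ)) * pd1 (fun y => pd1 (cgoU1 s) y + pd2 (cgoU2 s) y) x = 0 ∧
      (mu : ℂ) * lap (cgoU2 s) x +
        ((lam : ℂ) + (mu : ℂ)) * pd2 (fun y => pd1 (cgoU1 s) y + pd2 (cgoU2 s) y) x = 0 := by
  intro x hx
  -- pointwise first-derivative computations, valid for every point of U
  have pdU1 : ∀ y : ℝ × ℝ, (0 < y.1 ∨ y.2 ≠ 0) →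
      pd1 (cgoU1 s) y = g1 s (Lmap y) ∧ pd2 (cgoU1 s) y = Complex.I * g1 s (Lmap y) := by
    intro y hy
    rw [cgoU1_eq]
    exact pd_comp (g0 s) (g1 s) y (hasDerivAt_g0 s (Lmap_mem y hy))
  have pdU2 : ∀ y : ℝ × ℝ, (0 < y.1 ∨ y.2 ≠ 0) →
      pd1 (cgoU2 s) y = Complex.I * g1 s (Lmap y) ∧
      pd2 (cgoU2 s) y = Complex.I * (Complex.I * g1 s (Lmap y)) := by
    intro y hy
    rw [cgoU2_eq]
    exact pd_comp (fun w => Complex.I * g0 s w) (fun w => Complex.I * g1 s w) y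
      (((hasDerivAt_g0 s (Lmap_mem y hy)).const_mul Complex.I))
  have hmemU : {x : ℝ × ℝ | 0 < x.1 ∨ x.2 ≠ 0} ∈ nhds x := isOpen_U.mem_nhds hx
  -- divergence vanishes on U
  have hdiv : ∀ y : ℝ × ℝ, (0 < y.1 ∨ y.2 ≠ 0) →
      pd1 (cgoU1 s) y + pd2 (cgoU2 s) y = 0 := by
    intro y hy
    rw [(pdU1 y hy).1, (pdU2 y hy).2]
    linear_combination g1 s (Lmap y) * Complex.I_mul_I
  have hlap1 : lap (cgoU1 s) x = 0 := by
    have e1 : pd1 (cgoU1 s) =ᶠ[nhds x] fun y => g1 s (Lmap y) :=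
      Filter.eventuallyEq_of_mem hmemU fun y hy => (pdU1 y hy).1
    have e2 : pd2 (cgoU1 s) =ᶠ[nhds x] fun y => Complex.I * g1 s (Lmap y) :=
      Filter.eventuallyEq_of_mem hmemU fun y hy => (pdU1 y hy).2
    have h11 : pd1 (pd1 (cgoU1 s)) x = g2 s (Lmap x) := by
      rw [pd1, e1.fderiv_eq]
      exact (pd_comp (g1 s) (g2 s) x (hasDerivAt_g1 s (Lmap_mem x hx))).1
    have h22 : pd2 (pd2 (cgoU1 s)) x = Complex.I * (Complex.I * g2 s (Lmap x)) := by
      rw [pd2, e2.fderiv_eq]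
      exact (pd_comp (fun w => Complex.I * g1 s w) (fun w => Complex.I * g2 s w) x
        ((hasDerivAt_g1 s (Lmap_mem x hx)).const_mul Complex.I)).2
    rw [lap, h11, h22]
    linear_combination g2 s (Lmap x) * Complex.I_mul_I
  have hlap2 : lap (cgoU2 s) x = 0 := by
    have e1 : pd1 (cgoU2 s) =ᶠ[nhds x] fun y => Complex.I * g1 s (Lmap y) :=
      Filter.eventuallyEq_of_mem hmemU fun y hy => (pdU2 y hy).1
    have e2 : pd2 (cgoU2 s) =ᶠ[nhds x] fun y => Complex.I * (Complex.I * g1 s (Lmap y)) :=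
      Filter.eventuallyEq_of_mem hmemU fun y hy => (pdU2 y hy).2
    have h11 : pd1 (pd1 (cgoU2 s)) x = Complex.I * g2 s (Lmap x) := by
      rw [pd1, e1.fderiv_eq]
      exact (pd_comp (fun w => Complex.I * g1 s w) (fun w => Complex.I * g2 s w) x
        ((hasDerivAt_g1 s (Lmap_mem x hx)).const_mul Complex.I)).1
    have h22 : pd2 (pd2 (cgoU2 s)) x = Complex.I * (Complex.I * (Complex.I * g2 s (Lmap x))) := by
      rw [pd2, e2.fderiv_eq]
      exact (pd_comp (fun w => Complex.I * (Complex.I * g1 s w))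
        (fun w => Complex.I * (Complex.I * g2 s w)) x
        (((hasDerivAt_g1 s (Lmap_mem x hx)).const_mul Complex.I).const_mul Complex.I)).2
    rw [lap, h11, h22]
    linear_combination (Complex.I * g2 s (Lmap x)) * Complex.I_mul_I
  have ediv : (fun y => pd1 (cgoU1 s) y + pd2 (cgoU2 s) y) =ᶠ[nhds x] fun _ => (0 : ℂ) :=
    Filter.eventuallyEq_of_mem hmemU fun y hy => hdiv y hy
  have hfd : fderiv ℝ (fun y => pd1 (cgoU1 s) y + pd2 (cgoU2 s) y) x = 0 := by
    rw [ediv.fderiv_eq]; exact fderiv_const_apply 0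
  refine ⟨hdiv x hx, hlap1, hlap2, ?_, ?_⟩
  · rw [hlap1, mul_zero, zero_add, pd1, hfd]; simp
  · rw [hlap2, mul_zero, zero_add, pd2, hfd]; simp
end

section
/- Let −π < θ_m < θ_M < π with 0 < θ_M − θ_m < π, and let K = {(r cos θ, r sin θ) ∈ ℝ² : r > 0, θ_m < θ < θ_M}. Then for every s > 0, ∫_K exp(−√s · √(x₁ + i x₂)) dx = 6 i (e^{−2iθ_M} − e^{−2iθ_m}) s^{−2}, where √(x₁ + i x₂) is the principal branch of the complex square root and √s the real square root. -/
open MeasureTheory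

open Set Filter Complex Topology


noncomputable section

namespace SectorAux

lemma tendsto_sqrt_atTop : Tendsto Real.sqrt atTop atTop := by
  apply (tendsto_rpow_atTop (y := (1/2:ℝ)) (by norm_num)).congr'
  filter_upwards [eventually_ge_atTop (0:ℝ)] with x hx
  rw [← Real.sqrt_eq_rpow]

lemma tendsto_pow_mul_cexp {a : ℂ} (ha : 0 < a.re) (n : ℕ) :
    Tendsto (fun u : ℝ => (u:ℂ)^n * Complex.exp (-(a * u))) atTop (𝓝 0) := by
  rw [tendsto_zero_iff_norm_tendsto_zero]
  have h1 : ∀ᶠ u : ℝ in atTop, ‖(u:ℂ)^n * Complex.exp (-(a*u))‖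
      = u^n * Real.exp (-(a.re * u)) := by
    filter_upwards [eventually_ge_atTop (0:ℝ)] with u hu
    rw [norm_mul, norm_pow]
    rw [show ‖cexp (-(a*u))‖ = Real.exp (-(a*u)).re from Complex.norm_exp _]
    simp [Complex.norm_of_nonneg hu, _root_.abs_of_nonneg hu]
  rw [tendsto_congr' h1]
  have h2 : Tendsto (fun u : ℝ => a.re * u) atTop atTop :=
    Tendsto.const_mul_atTop ha tendsto_id
  have h3 := (Real.tendsto_pow_mul_exp_neg_atTop_nhds_zero n).comp h2
  have h4 := h3.const_mul ((a.re)^n)⁻¹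
  rw [mul_zero] at h4
  apply h4.congr'
  filter_upwards [eventually_ge_atTop (0:ℝ)] with u hu
  simp only [Function.comp]
  rw [mul_pow]
  field_simp


lemma sq_image_Ioi : (fun t : ℝ => t^2) '' Ioi 0 = Ioi 0 := by
  ext x
  constructor
  · rintro ⟨t, ht, rfl⟩; exact pow_pos (mem_Ioi.1 ht) 2
  · intro hx
    exact ⟨Real.sqrt x, Real.sqrt_pos.2 hx, Real.sq_sqrt (le_of_lt hx)⟩

lemma real_integrableOn {b : ℝ} (hb : 0 < b) :
    IntegrableOn (fun r : ℝ => r * Real.exp (-(b * Real.sqrt r))) (Ioi 0) := by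
  rw [← sq_image_Ioi, integrableOn_image_iff_integrableOn_abs_deriv_smul
      measurableSet_Ioi (f' := fun t => 2 * t)
      (fun x _ => by simpa using (hasDerivAt_pow 2 x).hasDerivWithinAt)
      (fun x hx y hy hxy => by nlinarith [mem_Ioi.1 hx, mem_Ioi.1 hy])]
  have h3 : IntegrableOn (fun t : ℝ => 2 * (t ^ (3:ℝ) * Real.exp (-b * t ^ (1:ℝ)))) (Ioi 0) :=
    (integrableOn_rpow_mul_exp_neg_mul_rpow (by norm_num) (by norm_num) hb).const_mul 2
  apply h3.congr_fun _ measurableSet_Ioi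
  intro t ht
  have ht' : (0:ℝ) < t := ht
  have h4 : Real.sqrt (t^2) = t := by
    rw [Real.sqrt_sq ht'.le]
  simp only [smul_eq_mul, h4, _root_.abs_of_pos (by linarith : (0:ℝ) < 2*t), Real.rpow_one,
    show (t:ℝ) ^ (3:ℝ) = t ^ (3:ℕ) by rw [← Real.rpow_natCast]; norm_num]
  ring_nf

lemma complex_integrableOn {a : ℂ} (ha : 0 < a.re) :
    IntegrableOn (fun r : ℝ => (r:ℂ) * Complex.exp (-(a * Real.sqrt r))) (Ioi 0) := by
  apply Integrable.mono' (real_integrableOn ha)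
  · apply Continuous.aestronglyMeasurable
    fun_prop
  · filter_upwards [ae_restrict_mem measurableSet_Ioi] with r hr
    have hr' : (0:ℝ) < r := hr
    rw [norm_mul, show ‖cexp (-(a * (Real.sqrt r : ℝ)))‖
        = Real.exp (-(a * (Real.sqrt r : ℝ))).re from Complex.norm_exp _]
    simp only [Complex.norm_real, Real.norm_eq_abs, Complex.neg_re, Complex.mul_re,
      Complex.ofReal_re, Complex.ofReal_im, mul_zero, sub_zero]
    rw [_root_.abs_of_pos hr']


lemma inner_integral {a : ℂ} (ha : 0 < a.re) :
    ∫ r in Ioi (0:ℝ), (r:ℂ) * Complex.exp (-(a * Real.sqrt r)) = 12 / a ^ 4 := by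
  have ha0 : a ≠ 0 := by
    intro h; rw [h] at ha; simp at ha
  set G : ℝ → ℂ := fun r => Complex.exp (-(a * Real.sqrt r)) *
      (-(2*((Real.sqrt r:ℂ)*(Real.sqrt r:ℂ)*(Real.sqrt r:ℂ))/a
        + 6*((Real.sqrt r:ℂ)*(Real.sqrt r:ℂ))/a^2 + 12*(Real.sqrt r:ℂ)/a^3 + 12/a^4))
    with hG
  have hderiv : ∀ r ∈ Ioi (0:ℝ), HasDerivAt G ((r:ℂ) * Complex.exp (-(a * Real.sqrt r))) r := by
    intro r hr
    have hr' : (0:ℝ) < r := hr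
    have hsp : 0 < Real.sqrt r := Real.sqrt_pos.2 hr'
    have hs0 : (Real.sqrt r : ℂ) ≠ 0 := by
      exact_mod_cast hsp.ne'
    have h1 : HasDerivAt (fun x : ℝ => ((Real.sqrt x : ℝ) : ℂ))
        ((1/(2*Real.sqrt r) : ℝ) : ℂ) r := (Real.hasDerivAt_sqrt hr'.ne').ofReal_comp
    have hexp : HasDerivAt (fun x : ℝ => Complex.exp (-(a * (Real.sqrt x : ℂ))))
        (Complex.exp (-(a * (Real.sqrt r:ℂ))) * (-(a * ((1/(2*Real.sqrt r) : ℝ) : ℂ)))) r :=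
      ((h1.const_mul a).neg).cexp
    have hA := (((h1.mul h1).mul h1).const_mul (2:ℂ)).div_const a
    have hB := ((h1.mul h1).const_mul (6:ℂ)).div_const (a^2)
    have hC := (h1.const_mul (12:ℂ)).div_const (a^3)
    have hAB := hA.add hB
    have hABC := hAB.add hC
    have hpoly := (hABC.add_const ((12:ℂ)/a^4)).neg
    have htot := hexp.mul hpoly
    refine htot.congr_deriv ?_
    have hu2 : (Real.sqrt r : ℂ)^2 = (r:ℂ) := by
      exact_mod_cast congrArg (Complex.ofReal) (Real.sq_sqrt hr'.le)
    have hcast : ((1/(2*Real.sqrt r) : ℝ) : ℂ) = 1/(2*(Real.sqrt r:ℂ)) := by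
      push_cast; ring
    simp only [Pi.mul_apply, Pi.add_apply, Pi.neg_apply]
    rw [← hu2, hcast]
    field_simp [ha0, hs0]
    ring
  have hcont : ContinuousWithinAt G (Ici 0) 0 := by
    apply Continuous.continuousWithinAt
    fun_prop
  have htend : Tendsto G atTop (𝓝 0) := by
    have houter : Tendsto (fun u : ℝ => Complex.exp (-(a*(u:ℂ))) *
        (-(2*((u:ℂ)*(u:ℂ)*(u:ℂ))/a + 6*((u:ℂ)*(u:ℂ))/a^2 + 12*(u:ℂ)/a^3 + 12/a^4)))
        atTop (𝓝 0) := by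
      have T := ((((tendsto_pow_mul_cexp ha 3).const_mul (2/a)).add
        ((tendsto_pow_mul_cexp ha 2).const_mul (6/a^2))).add
        (((tendsto_pow_mul_cexp ha 1).const_mul (12/a^3)).add
        ((tendsto_pow_mul_cexp ha 0).const_mul (12/a^4)))).neg
      simp only [mul_zero, add_zero, neg_zero] at T
      apply T.congr
      intro u
      field_simp [ha0]
      ring
    exact houter.comp tendsto_sqrt_atTop
  have key := integral_Ioi_of_hasDerivAt_of_tendsto hcont hderiv (complex_integrableOn ha) htend
  have hG0 : G 0 = -(12/a^4) := by
    rw [hG]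
    norm_num
  rw [key, hG0]
  ring


lemma cpow_half_polar {r θ : ℝ} (hr : 0 < r) (hθ1 : -Real.pi < θ) (hθ2 : θ < Real.pi) :
    (((r * Real.cos θ : ℝ) : ℂ) + ((r * Real.sin θ : ℝ) : ℂ) * Complex.I) ^ (1/2 : ℂ)
      = (Real.sqrt r : ℂ) * Complex.exp ((θ/2 : ℝ) * Complex.I) := by
  set w : ℂ := (Real.log r : ℂ) + (θ:ℝ) * Complex.I with hw
  have him : w.im = θ := by
    simp [hw]
  have hexpw : Complex.exp w = ((r * Real.cos θ : ℝ) : ℂ) + ((r * Real.sin θ : ℝ) : ℂ) * Complex.I := by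
    rw [hw, Complex.exp_add, Complex.exp_mul_I]
    rw [← Complex.ofReal_exp, Real.exp_log hr, ← Complex.ofReal_cos, ← Complex.ofReal_sin]
    push_cast
    ring
  have hz0 : (((r * Real.cos θ : ℝ) : ℂ) + ((r * Real.sin θ : ℝ) : ℂ) * Complex.I) ≠ 0 := by
    rw [← hexpw]; exact Complex.exp_ne_zero w
  have hlog : Complex.log (((r * Real.cos θ : ℝ) : ℂ) + ((r * Real.sin θ : ℝ) : ℂ) * Complex.I)
      = w := by
    rw [← hexpw]
    exact Complex.log_exp (by rw [him]; exact hθ1) (by rw [him]; exact hθ2.le)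
  rw [Complex.cpow_def_of_ne_zero hz0, hlog, hw]
  rw [show ((Real.log r : ℂ) + (θ:ℝ) * Complex.I) * (1/2 : ℂ)
      = ((Real.log r / 2 : ℝ) : ℂ) + ((θ/2 : ℝ) : ℂ) * Complex.I by push_cast; ring]
  rw [Complex.exp_add, ← Complex.ofReal_exp]
  congr 2
  rw [← Real.log_sqrt hr.le, Real.exp_log (Real.sqrt_pos.2 hr)]

end SectorAux


open SectorAux in
/-- the sector integral of the scalar CGO solution
`exp(-√s √z)`, `z = x₁ + i x₂` (principal branch square root), equals
`6 i (e^{-2iθ_M} - e^{-2iθ_m}) s^{-2}`. -/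
theorem sector_integral_scalar_cgo (θm θM : ℝ) (hθm : -Real.pi < θm) (hθM : θM < Real.pi)
    (hlt : 0 < θM - θm) (hopen : θM - θm < Real.pi) (s : ℝ) (hs : 0 < s) :
    ∫ x : ℝ × ℝ in {x : ℝ × ℝ | ∃ r θ : ℝ, 0 < r ∧ θm < θ ∧ θ < θM ∧
        x = (r * Real.cos θ, r * Real.sin θ)},
      Complex.exp (-(Real.sqrt s : ℂ) * ((x.1 : ℂ) + (x.2 : ℂ) * Complex.I) ^ (1/2 : ℂ))
      = 6 * Complex.I *
        (Complex.exp (-2 * (θM : ℂ) * Complex.I) - Complex.exp (-2 * (θm : ℂ) * Complex.I)) /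
        (s : ℂ) ^ 2 := by
  have hπ := Real.pi_pos
  have hθmM : θm < θM := by linarith
  set f : ℝ × ℝ → ℂ := fun x =>
    Complex.exp (-(Real.sqrt s : ℂ) * ((x.1 : ℂ) + (x.2 : ℂ) * Complex.I) ^ (1/2 : ℂ)) with hf
  set a : ℝ → ℂ := fun θ => (Real.sqrt s : ℂ) * Complex.exp ((θ/2 : ℝ) * Complex.I) with ha
  set F : ℝ × ℝ → ℂ := fun p => (p.1 : ℂ) * Complex.exp (-(a p.2 * (Real.sqrt p.1 : ℂ))) with hF
  set T : Set (ℝ × ℝ) := Set.Ioi (0:ℝ) ×ˢ Set.Ioo θm θM with hT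
  have hTmeas : MeasurableSet T := measurableSet_Ioi.prod measurableSet_Ioo
  have hTsub : T ⊆ polarCoord.target := by
    rw [polarCoord_target]
    exact Set.prod_mono subset_rfl (Set.Ioo_subset_Ioo hθm.le hθM.le)
  have hKeq : {x : ℝ × ℝ | ∃ r θ : ℝ, 0 < r ∧ θm < θ ∧ θ < θM ∧
      x = (r * Real.cos θ, r * Real.sin θ)} = polarCoord.symm '' T := by
    ext x
    constructor
    · rintro ⟨r, θ, h1, h2, h3, rfl⟩
      exact ⟨(r, θ), ⟨h1, h2, h3⟩, rfl⟩
    · rintro ⟨⟨r, θ⟩, ⟨h1, h2⟩, rfl⟩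
      exact ⟨r, θ, h1, h2.1, h2.2, rfl⟩
  -- change of variables to polar coordinates
  set B : ℝ × ℝ → ℝ × ℝ →L[ℝ] ℝ × ℝ := fun p =>
    LinearMap.toContinuousLinearMap (Matrix.toLin (Module.Basis.finTwoProd ℝ) (Module.Basis.finTwoProd ℝ)
      !![Real.cos p.2, -p.1 * Real.sin p.2; Real.sin p.2, p.1 * Real.cos p.2]) with hB
  have hBdet : ∀ p, (B p).det = p.1 := by
    intro p
    conv_rhs => rw [← one_mul p.1, ← Real.cos_sq_add_sin_sq p.2]
    simp only [hB, neg_mul, LinearMap.det_toContinuousLinearMap, LinearMap.det_toLin,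
      Matrix.det_fin_two_of, sub_neg_eq_add]
    ring
  have step1 : ∫ x in polarCoord.symm '' T, f x
      = ∫ p in T, |(B p).det| • f (polarCoord.symm p) :=
    integral_image_eq_integral_abs_det_fderiv_smul volume hTmeas
      (fun p _ => (hasFDerivAt_polarCoord_symm p).hasFDerivWithinAt)
      (polarCoord.symm.injOn.mono hTsub) f
  have step2 : ∫ p in T, |(B p).det| • f (polarCoord.symm p) = ∫ p in T, F p := by
    apply setIntegral_congr_fun hTmeas
    intro p hp
    obtain ⟨hp1, hp2⟩ := hp
    have hp1' : (0:ℝ) < p.1 := hp1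
    have hθ1 : -Real.pi < p.2 := lt_trans hθm hp2.1
    have hθ2 : p.2 < Real.pi := lt_trans hp2.2 hθM
    have hsymm : polarCoord.symm p = (p.1 * Real.cos p.2, p.1 * Real.sin p.2) := rfl
    show |(B p).det| • f (polarCoord.symm p) = F p
    rw [hBdet, _root_.abs_of_pos hp1', Complex.real_smul, hf, hF, ha]
    simp only [hsymm]
    rw [cpow_half_polar hp1' hθ1 hθ2]
    congr 2
    ring
  have hare : ∀ θ : ℝ, (a θ).re = Real.sqrt s * Real.cos (θ/2) := by
    intro θ
    rw [ha]
    simp only []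
    rw [Complex.mul_re]
    rw [show ((θ/2:ℝ):ℂ) * Complex.I = ((θ/2 : ℝ):ℂ) * Complex.I from rfl,
      Complex.exp_ofReal_mul_I_re, Complex.exp_ofReal_mul_I_im]
    simp
  have hcos : ∀ θ : ℝ, θm < θ → θ < θM → 0 < (a θ).re := by
    intro θ h1 h2
    rw [hare]
    apply mul_pos (Real.sqrt_pos.2 hs)
    apply Real.cos_pos_of_mem_Ioo
    constructor <;> [linarith; linarith]
  -- integrability on the product set
  have hM : max |θm| |θM| < Real.pi := by
    rw [max_lt_iff]
    constructor <;> rw [abs_lt] <;> constructor <;> linarith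
  have hM0 : 0 ≤ max |θm| |θM| := le_trans (abs_nonneg θm) (le_max_left _ _)
  set b : ℝ := Real.sqrt s * Real.cos (max |θm| |θM| / 2) with hb
  have hbpos : 0 < b := by
    apply mul_pos (Real.sqrt_pos.2 hs)
    apply Real.cos_pos_of_mem_Ioo
    constructor <;> [linarith; linarith]
  have hFcont : Continuous F := by
    rw [hF, ha]
    fun_prop
  have hgint : Integrable (fun p : ℝ × ℝ => p.1 * Real.exp (-(b * Real.sqrt p.1)) * 1)
      ((volume.restrict (Set.Ioi (0:ℝ))).prod (volume.restrict (Set.Ioo θm θM))) := by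
    haveI : IsFiniteMeasure (volume.restrict (Set.Ioo θm θM)) := by
      constructor
      rw [Measure.restrict_apply_univ, Real.volume_Ioo]
      exact ENNReal.ofReal_lt_top
    exact Integrable.mul_prod (real_integrableOn hbpos) (integrable_const 1)
  have hInt : Integrable F
      ((volume.restrict (Set.Ioi (0:ℝ))).prod (volume.restrict (Set.Ioo θm θM))) := by
    apply Integrable.mono' hgint (hFcont.aestronglyMeasurable)
    rw [Measure.prod_restrict]
    filter_upwards [ae_restrict_mem (measurableSet_Ioi.prod measurableSet_Ioo)] with p hp
    obtain ⟨hp1, hp2⟩ := hp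
    have hp1' : (0:ℝ) < p.1 := hp1
    have hple : |p.2| ≤ max |θm| |θM| := by
      rw [abs_le]
      constructor
      · have h1 := neg_abs_le θm
        have h2 := le_max_left |θm| |θM|
        have := hp2.1
        linarith
      · have h1 := le_abs_self θM
        have h2 := le_max_right |θm| |θM|
        have := hp2.2
        linarith
    have hcosle : Real.cos (max |θm| |θM| / 2) ≤ Real.cos (p.2/2) := by
      rw [← Real.cos_abs (p.2/2)]
      apply Real.cos_le_cos_of_nonneg_of_le_pi (abs_nonneg _) (by linarith)
      rw [abs_div, abs_of_pos (by norm_num : (0:ℝ) < 2)]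
      linarith
    have hnorm : ‖F p‖ = p.1 * Real.exp (-(((a p.2).re) * Real.sqrt p.1)) := by
      rw [hF]
      simp only []
      rw [norm_mul, show ‖Complex.exp (-(a p.2 * ((Real.sqrt p.1 : ℝ) : ℂ)))‖
          = Real.exp ((-(a p.2 * ((Real.sqrt p.1 : ℝ) : ℂ))).re) from Complex.norm_exp _]
      congr 1
      · simp [_root_.abs_of_pos hp1']
      · congr 1
        simp [Complex.mul_re]
    rw [hnorm, hare, mul_one]
    apply mul_le_mul_of_nonneg_left _ hp1'.le
    apply Real.exp_le_exp.2
    rw [neg_le_neg_iff, hb]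
    apply mul_le_mul_of_nonneg_right _ (Real.sqrt_nonneg p.1)
    exact mul_le_mul_of_nonneg_left hcosle (Real.sqrt_nonneg s)
  -- assemble
  rw [hKeq, step1, step2]
  have step3 : ∫ p in T, F p
      = ∫ θ in Set.Ioo θm θM, ∫ r in Set.Ioi (0:ℝ), F (r, θ) := by
    rw [hT, Measure.volume_eq_prod, ← Measure.prod_restrict]
    exact integral_prod_symm F hInt
  rw [step3]
  have step4 : ∫ θ in Set.Ioo θm θM, ∫ r in Set.Ioi (0:ℝ), F (r, θ)
      = ∫ θ in Set.Ioo θm θM, (12 / (s:ℂ)^2) * Complex.exp ((-2*Complex.I) * (θ:ℂ)) := by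
    apply setIntegral_congr_fun measurableSet_Ioo
    intro θ hθ
    show ∫ r in Set.Ioi (0:ℝ), F (r, θ) = (12 / (s:ℂ)^2) * Complex.exp ((-2*Complex.I) * (θ:ℂ))
    have h1 := hcos θ hθ.1 hθ.2
    have h2 : ∫ r in Set.Ioi (0:ℝ), F (r, θ) = 12 / (a θ)^4 := by
      rw [hF]
      simp only []
      exact inner_integral h1
    rw [h2, ha]
    simp only []
    have ha4 : ((Real.sqrt s : ℂ) * Complex.exp (((θ/2:ℝ):ℂ) * Complex.I))^4
        = (s:ℂ)^2 * Complex.exp (((2*θ:ℝ):ℂ) * Complex.I) := by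
      rw [mul_pow, ← Complex.exp_nat_mul]
      congr 1
      · rw [show (4:ℕ) = 2*2 from rfl, pow_mul, ← Complex.ofReal_pow, Real.sq_sqrt hs.le]
      · push_cast
        ring
    rw [ha4]
    rw [div_mul_eq_div_div, div_eq_mul_inv (12 / (s:ℂ)^2), ← Complex.exp_neg]
    congr 1
    push_cast
    ring
  rw [step4, integral_const_mul]
  rw [← MeasureTheory.integral_Ioc_eq_integral_Ioo,
    ← intervalIntegral.integral_of_le hθmM.le]
  rw [integral_exp_mul_complex (by simp [Complex.I_ne_zero] : (-2*Complex.I : ℂ) ≠ 0)]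
  have hs2 : ((s:ℂ))^2 ≠ 0 := pow_ne_zero 2 (by exact_mod_cast hs.ne')
  have e1 : (-2*Complex.I) * (θM:ℂ) = -2 * (θM:ℂ) * Complex.I := by ring
  have e2 : (-2*Complex.I) * (θm:ℂ) = -2 * (θm:ℂ) * Complex.I := by ring
  rw [e1, e2]
  field_simp
  ring_nf
  simp [Complex.I_sq]
end
end
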